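/- arXiv:1703.06654 — 3 statements merged into one kernel-verified Lean document; each statement's English description precedes it below -/
import Mathlib

section
/- For any large x and any integer 0 ≤ k ≤ log log x − 5, the number of integers d ≤ x all of whose prime factors lie in the interval (x^{e^{−(k+1)}}, x^{e^{−k}}] is at most C · 2^{−e^k} · x / log x for an absolute constant C. -/
open scoped Classical

open scoped ArithmeticFunction ArithmeticFunction.Omega

lemma aux_cheb (M : ℕ) (w T : ℝ) (hw : 2 ≤ w) (hT : 0 ≤ T) :
    (((Finset.Icc 1 M).filter (fun p => Nat.Prime p ∧ w ≤ (p:ℝ) ∧ (p:ℝ) ≤ T)).card : ℝ)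
      ≤ T * Real.log 4 / Real.log w := by
  set F := (Finset.Icc 1 M).filter (fun p => Nat.Prime p ∧ w ≤ (p:ℝ) ∧ (p:ℝ) ≤ T) with hF
  have hw0 : (0:ℝ) < Real.log w := Real.log_pos (by linarith)
  have hsub : F ⊆ (Finset.range (⌊T⌋₊ + 1)).filter Nat.Prime := by
    intro p hp
    simp only [hF, Finset.mem_filter, Finset.mem_Icc, Finset.mem_range] at hp ⊢
    refine ⟨Nat.lt_succ_of_le (Nat.le_floor hp.2.2.2), hp.2.1⟩
  have h3 : (∏ p ∈ F, p) ≤ primorial ⌊T⌋₊ := by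
    rw [primorial]
    exact Finset.prod_le_prod_of_subset_of_one_le' hsub
      (fun i hi _ => (Finset.mem_filter.mp hi).2.one_lt.le)
  have h4 : (∏ p ∈ F, p) ≤ 4 ^ ⌊T⌋₊ := h3.trans (primorial_le_4_pow _)
  have h2 : w ^ F.card ≤ ∏ p ∈ F, (p:ℝ) := by
    rw [← Finset.prod_const]
    exact Finset.prod_le_prod (fun _ _ => by linarith) (fun p hp => (Finset.mem_filter.mp hp).2.2.1)
  have h5 : (∏ p ∈ F, (p:ℝ)) ≤ (4:ℝ) ^ (T : ℝ) := by
    rw [← Nat.cast_prod]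
    calc ((∏ p ∈ F, p : ℕ) : ℝ) ≤ ((4 ^ ⌊T⌋₊ : ℕ) : ℝ) := by exact_mod_cast h4
      _ = (4:ℝ) ^ (⌊T⌋₊ : ℝ) := by rw [Nat.cast_pow]; norm_num [Real.rpow_natCast]
      _ ≤ (4:ℝ) ^ (T : ℝ) := Real.rpow_le_rpow_of_exponent_le (by norm_num) (Nat.floor_le hT)
  have h6 : w ^ F.card ≤ (4:ℝ) ^ (T:ℝ) := h2.trans h5
  have h7 : (F.card : ℝ) * Real.log w ≤ T * Real.log 4 := by
    have := Real.log_le_log (by positivity) h6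
    rwa [Real.log_pow, Real.log_rpow (by norm_num)] at this
  rw [le_div_iff₀ hw0]
  exact h7


noncomputable def ff (e : ℕ) : ℝ := (5:ℝ)^(Ω e)/(e:ℝ)

lemma ff_nonneg (e : ℕ) : 0 ≤ ff e := by unfold ff; positivity

lemma aux_euler (M : ℕ) (P : Finset ℕ) (hP : ∀ p ∈ P, Nat.Prime p ∧ (10:ℝ) ≤ (p:ℝ)) :
    ∑ e ∈ (Finset.Icc 1 M).filter (fun e => ∀ q : ℕ, q.Prime → q ∣ e → q ∈ P),
      ff e ≤ ∏ p ∈ P, (1 - 5/(p:ℝ))⁻¹ := by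
  induction P using Finset.induction_on with
  | empty =>
    have hsub : (Finset.Icc 1 M).filter
        (fun e => ∀ q : ℕ, q.Prime → q ∣ e → q ∈ (∅ : Finset ℕ)) ⊆ {1} := by
      intro e he
      simp only [Finset.mem_filter, Finset.mem_Icc] at he
      by_contra hne
      simp only [Finset.mem_singleton] at hne
      obtain ⟨q, hq, hqd⟩ := Nat.exists_prime_and_dvd hne
      exact absurd (he.2 q hq hqd) (Finset.notMem_empty q)
    calc ∑ e ∈ (Finset.Icc 1 M).filter
          (fun e => ∀ q : ℕ, q.Prime → q ∣ e → q ∈ (∅ : Finset ℕ)), ff e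
        ≤ ∑ e ∈ ({1} : Finset ℕ), ff e :=
          Finset.sum_le_sum_of_subset_of_nonneg hsub (fun i _ _ => ff_nonneg i)
      _ = 1 := by simp [ff]
      _ = ∏ p ∈ (∅ : Finset ℕ), (1 - 5/(p:ℝ))⁻¹ := by simp
  | @insert p P₀ hpP₀ ih =>
    have hp : p.Prime := (hP p (Finset.mem_insert_self p P₀)).1
    have hp10 : (10:ℝ) ≤ (p:ℝ) := (hP p (Finset.mem_insert_self p P₀)).2
    have hp10' : (10:ℕ) ≤ p := by exact_mod_cast hp10
    have hP₀ : ∀ q ∈ P₀, Nat.Prime q ∧ (10:ℝ) ≤ (q:ℝ) :=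
      fun q hq => hP q (Finset.mem_insert_of_mem hq)
    set A := (Finset.Icc 1 M).filter
        (fun e => ∀ q : ℕ, q.Prime → q ∣ e → q ∈ insert p P₀) with hA
    set A₀ := (Finset.Icc 1 M).filter
        (fun e => ∀ q : ℕ, q.Prime → q ∣ e → q ∈ P₀) with hA₀
    set D := (Finset.range (M+1)) ×ˢ A₀ with hD
    -- elements of A₀ are not divisible by p
    have hA₀p : ∀ e ∈ A₀, ¬ p ∣ e := by
      intro e he hdvd
      simp only [hA₀, Finset.mem_filter] at he
      exact hpP₀ (he.2 p hp hdvd)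
    have hA₀0 : ∀ e ∈ A₀, e ≠ 0 := by
      intro e he
      simp only [hA₀, Finset.mem_filter, Finset.mem_Icc] at he
      omega
    have hsub : A ⊆ D.image (fun ae : ℕ × ℕ => p ^ ae.1 * ae.2) := by
      intro e he
      simp only [hA, Finset.mem_filter, Finset.mem_Icc] at he
      have he0 : e ≠ 0 := by omega
      set a := e.factorization p with ha
      set e' := ordCompl[p] e with he'
      have hae : p ^ a * e' = e := Nat.ordProj_mul_ordCompl_eq_self e p
      have hpa : p ^ a ∣ e := Nat.ordProj_dvd e p
      have haM : a ≤ M := by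
        have h1 : a < 2 ^ a := Nat.lt_two_pow_self
        have h2 : 2 ^ a ≤ p ^ a := Nat.pow_le_pow_left hp.two_le a
        have h3 : p ^ a ≤ e := Nat.le_of_dvd (Nat.pos_of_ne_zero he0) hpa
        omega
      have he'A₀ : e' ∈ A₀ := by
        simp only [hA₀, Finset.mem_filter, Finset.mem_Icc]
        have hd : e' ∣ e := Nat.ordCompl_dvd e p
        refine ⟨⟨Nat.ordCompl_pos p he0, le_trans (Nat.le_of_dvd (Nat.pos_of_ne_zero he0) hd) he.1.2⟩, ?_⟩
        intro q hq hqd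
        have : q ∈ insert p P₀ := he.2 q hq (hqd.trans hd)
        rcases Finset.mem_insert.mp this with h | h
        · exfalso
          rw [h] at hqd
          exact Nat.not_dvd_ordCompl hp he0 hqd
        · exact h
      refine Finset.mem_image.mpr ⟨(a, e'), ?_, hae⟩
      simp only [hD, Finset.mem_product, Finset.mem_range]
      exact ⟨Nat.lt_succ_of_le haM, he'A₀⟩
    have hinj : Set.InjOn (fun ae : ℕ × ℕ => p ^ ae.1 * ae.2) D := by
      intro u hu v hv huv
      simp only [hD, Finset.mem_coe, Finset.mem_product] at hu hv
      simp only at huv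
      have hu2 := hA₀p u.2 hu.2
      have hv2 := hA₀p v.2 hv.2
      have hu0 := hA₀0 u.2 hu.2
      have hv0 := hA₀0 v.2 hv.2
      have hval : u.1 = v.1 := by
        have h1 : (p ^ u.1 * u.2).factorization p = u.1 := by
          rw [Nat.factorization_mul (pow_ne_zero _ hp.pos.ne') hu0,
            hp.factorization_pow]
          simp [Nat.factorization_eq_zero_of_not_dvd hu2]
        have h2 : (p ^ v.1 * v.2).factorization p = v.1 := by
          rw [Nat.factorization_mul (pow_ne_zero _ hp.pos.ne') hv0,
            hp.factorization_pow]
          simp [Nat.factorization_eq_zero_of_not_dvd hv2]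
        rw [← h1, ← h2, huv]
      have hval2 : u.2 = v.2 := by
        rw [hval] at huv
        exact Nat.eq_of_mul_eq_mul_left (Nat.pow_pos hp.pos) huv
      exact Prod.ext hval hval2
    have key : ∑ e ∈ A, ff e ≤ (∑ a ∈ Finset.range (M+1), (5/(p:ℝ))^a) * ∑ e ∈ A₀, ff e := by
      calc ∑ e ∈ A, ff e
          ≤ ∑ e ∈ D.image (fun ae : ℕ × ℕ => p ^ ae.1 * ae.2), ff e :=
            Finset.sum_le_sum_of_subset_of_nonneg hsub (fun i _ _ => ff_nonneg i)
        _ = ∑ ae ∈ D, ff (p ^ ae.1 * ae.2) := Finset.sum_image (fun u hu v hv h => hinj hu hv h)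
        _ = ∑ a ∈ Finset.range (M+1), ∑ e ∈ A₀, ff (p ^ a * e) := by
            rw [hD]; exact Finset.sum_product _ _ _
        _ = ∑ a ∈ Finset.range (M+1), ∑ e ∈ A₀, (5/(p:ℝ))^a * ff e := by
            refine Finset.sum_congr rfl (fun a _ => Finset.sum_congr rfl (fun e he => ?_))
            have he0 : e ≠ 0 := hA₀0 e he
            have hΩ : Ω (p ^ a * e) = a + Ω e := by
              rw [ArithmeticFunction.cardFactors_mul (pow_ne_zero _ hp.pos.ne') he0,
                ArithmeticFunction.cardFactors_apply_prime_pow hp]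
            unfold ff
            rw [hΩ, pow_add]
            have hpc : ((p:ℝ)) ≠ 0 := by positivity
            have hcast : ((p ^ a * e : ℕ) : ℝ) = (p:ℝ)^a * (e:ℝ) := by push_cast; ring
            rw [hcast, div_pow]
            field_simp
        _ = (∑ a ∈ Finset.range (M+1), (5/(p:ℝ))^a) * ∑ e ∈ A₀, ff e := by
            rw [Finset.sum_mul]
            exact Finset.sum_congr rfl (fun a _ => by rw [Finset.mul_sum])
    have hgeom : (∑ a ∈ Finset.range (M+1), (5/(p:ℝ))^a) ≤ (1 - 5/(p:ℝ))⁻¹ := by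
      have hr0 : (0:ℝ) ≤ 5/(p:ℝ) := by positivity
      have hr1 : 5/(p:ℝ) ≤ 1/2 := by
        rw [div_le_div_iff₀ (by linarith) (by norm_num)]
        linarith
      have hne : (5/(p:ℝ)) ≠ 1 := by linarith
      have h2 : (0:ℝ) < 1 - 5/(p:ℝ) := by linarith
      rw [geom_sum_eq hne]
      have heq : ((5/(p:ℝ)) ^ (M+1) - 1) / (5/(p:ℝ) - 1) = (1 - (5/(p:ℝ)) ^ (M+1)) / (1 - 5/(p:ℝ)) := by
        rw [div_eq_div_iff (by linarith) (by linarith)]; ring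
      rw [heq, inv_eq_one_div, div_le_div_iff₀ h2 h2]
      have := pow_nonneg hr0 (M+1)
      nlinarith
    have h2' : (0:ℝ) < 1 - 5/(p:ℝ) := by
      have : 5/(p:ℝ) ≤ 1/2 := by
        rw [div_le_div_iff₀ (by linarith) (by norm_num)]
        linarith
      linarith
    calc ∑ e ∈ A, ff e
        ≤ (∑ a ∈ Finset.range (M+1), (5/(p:ℝ))^a) * ∑ e ∈ A₀, ff e := key
      _ ≤ (1 - 5/(p:ℝ))⁻¹ * ∑ e ∈ A₀, ff e := by
          apply mul_le_mul_of_nonneg_right hgeom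
          exact Finset.sum_nonneg (fun i _ => ff_nonneg i)
      _ ≤ (1 - 5/(p:ℝ))⁻¹ * ∏ q ∈ P₀, (1 - 5/(q:ℝ))⁻¹ := by
          exact mul_le_mul_of_nonneg_left (ih hP₀) (inv_nonneg.mpr h2'.le)
      _ = ∏ q ∈ insert p P₀, (1 - 5/(q:ℝ))⁻¹ := by rw [Finset.prod_insert hpP₀]


lemma aux_tel (a b : ℕ) (h1 : 1 ≤ a) (hab : a ≤ b) :
    ∑ j ∈ Finset.Icc a b, (Real.log j - Real.log ((j-1 : ℕ):ℝ)) = Real.log b - Real.log ((a-1 : ℕ):ℝ) := by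
  induction b with
  | zero => omega
  | succ b ihb =>
    rcases Nat.lt_or_ge a (b+1) with h | h
    · have hab' : a ≤ b := by omega
      rw [Finset.sum_Icc_succ_top (by omega : a ≤ b + 1), ihb hab']
      have : (b + 1 - 1 : ℕ) = b := by omega
      rw [this]
      ring
    · have : a = b + 1 := by omega
      subst this
      simp

lemma aux_recip_sum (N : ℕ) (y z : ℝ) (hy0 : 0 < y) (hy4 : Real.exp 4 ≤ Real.log y)
    (hzy : Real.log z = Real.exp 1 * Real.log y) :
    ∑ p ∈ (Finset.Icc 1 N).filter (fun p => Nat.Prime p ∧ y ≤ (p:ℝ) ∧ (p:ℝ) ≤ z),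
      1/(p:ℝ) ≤ 8 := by
  have hlog2 : (0:ℝ) < Real.log 2 := Real.log_pos (by norm_num)
  have hlog2' : Real.log 2 ≤ 1 := by
    rw [← Real.log_exp 1]
    apply Real.log_le_log (by norm_num)
    have := Real.add_one_le_exp (1:ℝ)
    linarith
  have he1 : (2:ℝ) ≤ Real.exp 1 := by
    have := Real.add_one_le_exp (1:ℝ)
    linarith
  have he4 : (53:ℝ) ≤ Real.exp 4 := by
    have h2 : (2.7:ℝ) ≤ Real.exp 1 := by
      have := Real.exp_one_gt_d9
      linarith
    have h3 : (2.7:ℝ)^4 ≤ (Real.exp 1)^4 := by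
      apply pow_le_pow_left₀ (by norm_num) h2
    rw [← Real.exp_nat_mul] at h3
    norm_num at h3 ⊢
    linarith
  set β := Real.log y / Real.log 2 with hβ
  have hβ53 : (53:ℝ) ≤ β := by
    rw [hβ, le_div_iff₀ hlog2]
    nlinarith [hy4]
  have hβ0 : (0:ℝ) < β := by linarith
  set P := (Finset.Icc 1 N).filter (fun p => Nat.Prime p ∧ y ≤ (p:ℝ) ∧ (p:ℝ) ≤ z) with hP
  have hy1 : (1:ℝ) < y := by
    have h0 : (0:ℝ) < Real.log y := by nlinarith
    calc (1:ℝ) = Real.exp 0 := Real.exp_zero.symm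
      _ < Real.exp (Real.log y) := Real.exp_lt_exp.mpr h0
      _ = y := Real.exp_log hy0
  set J := (Finset.Icc 1 (Nat.log 2 N)).filter
      (fun j : ℕ => β - 1 ≤ (j:ℝ) ∧ (j:ℝ) ≤ Real.exp 1 * β) with hJ
  have hmaps : ∀ p ∈ P, Nat.log 2 p ∈ J := by
    intro p hp
    have hp' := Finset.mem_filter.mp hp
    have hpIcc := hp'.1
    have hprime := hp'.2.1
    have hyp := hp'.2.2.1
    have hpz := hp'.2.2.2
    have hp2 : 2 ≤ p := hprime.two_le
    have hp0 : p ≠ 0 := by omega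
    have hpN : p ≤ N := (Finset.mem_Icc.mp hpIcc).2
    set j := Nat.log 2 p with hj
    have hlow : (2:ℕ)^j ≤ p := Nat.pow_log_le_self 2 hp0
    have hhigh : p < (2:ℕ)^(j+1) := Nat.lt_pow_succ_log_self (by norm_num) p
    simp only [hJ, Finset.mem_filter, Finset.mem_Icc]
    refine ⟨⟨Nat.log_pos (by norm_num) hp2, Nat.log_mono_right hpN⟩, ?_, ?_⟩
    · have h1 : y ≤ ((2:ℕ)^(j+1) : ℝ) := by
        have : (p:ℝ) < ((2:ℕ)^(j+1) : ℝ) := by exact_mod_cast hhigh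
        linarith
      have h2 : Real.log y ≤ ((j:ℝ)+1) * Real.log 2 := by
        calc Real.log y ≤ Real.log ((2:ℕ)^(j+1) : ℝ) := Real.log_le_log hy0 h1
          _ = ((j:ℝ)+1) * Real.log 2 := by
              push_cast
              rw [Real.log_pow]
              push_cast
              ring
      have h5 : Real.log y / Real.log 2 ≤ (j:ℝ)+1 := by
        rw [div_le_iff₀ hlog2]
        linarith
      have h6 : β ≤ (j:ℝ)+1 := h5
      linarith
    · have h1 : ((2:ℕ)^j : ℝ) ≤ z := by
        have : ((2:ℕ)^j : ℝ) ≤ (p:ℝ) := by exact_mod_cast hlow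
        linarith
      have h2 : (j:ℝ) * Real.log 2 ≤ Real.log z := by
        calc (j:ℝ) * Real.log 2 = Real.log ((2:ℕ)^j : ℝ) := by
              push_cast
              rw [Real.log_pow]
          _ ≤ Real.log z := Real.log_le_log (by positivity) h1
      rw [hzy] at h2
      have h3 : Real.exp 1 * Real.log y = (Real.exp 1 * β) * Real.log 2 := by
        rw [hβ]
        field_simp
      rw [h3] at h2
      nlinarith
  have hsplit : ∑ p ∈ P, 1/(p:ℝ) = ∑ j ∈ J, ∑ p ∈ P.filter (fun p => Nat.log 2 p = j), 1/(p:ℝ) :=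
    (Finset.sum_fiberwise_of_maps_to hmaps _).symm
  have hblock : ∀ j ∈ J, ∑ p ∈ P.filter (fun p => Nat.log 2 p = j), 1/(p:ℝ) ≤ 4 / (j:ℝ) := by
    intro j hj
    simp only [hJ, Finset.mem_filter, Finset.mem_Icc] at hj
    have hj1 : 1 ≤ j := hj.1.1
    have hj0 : (0:ℝ) < (j:ℝ) := by exact_mod_cast hj1
    have h2j : (0:ℝ) < (2:ℝ)^j := by positivity
    have hsub : P.filter (fun p => Nat.log 2 p = j) ⊆
        (Finset.Icc 1 N).filter (fun p => Nat.Prime p ∧ ((2:ℝ)^j) ≤ (p:ℝ) ∧ (p:ℝ) ≤ (2:ℝ)^(j+1)) := by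
      intro p hp
      simp only [Finset.mem_filter, hP] at hp ⊢
      obtain ⟨⟨hpIcc, hprime, _, _⟩, hlog⟩ := hp
      have hp0 : p ≠ 0 := by have := hprime.two_le; omega
      have hlow : (2:ℕ)^j ≤ p := by rw [← hlog]; exact Nat.pow_log_le_self 2 hp0
      have hhigh : p < (2:ℕ)^(j+1) := by rw [← hlog]; exact Nat.lt_pow_succ_log_self (by norm_num) p
      refine ⟨hpIcc, hprime, ?_, ?_⟩
      · exact_mod_cast hlow
      · have : (p:ℝ) < ((2:ℕ)^(j+1):ℝ) := by exact_mod_cast hhigh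
        push_cast at this ⊢
        linarith
    have hcard : ((P.filter (fun p => Nat.log 2 p = j)).card : ℝ)
        ≤ (2:ℝ)^(j+1) * Real.log 4 / Real.log ((2:ℝ)^j) := by
      calc ((P.filter (fun p => Nat.log 2 p = j)).card : ℝ)
          ≤ (((Finset.Icc 1 N).filter (fun p => Nat.Prime p ∧ ((2:ℝ)^j) ≤ (p:ℝ) ∧ (p:ℝ) ≤ (2:ℝ)^(j+1))).card : ℝ) := by
            exact_mod_cast Finset.card_le_card hsub
        _ ≤ (2:ℝ)^(j+1) * Real.log 4 / Real.log ((2:ℝ)^j) :=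
            aux_cheb N _ _ (by
              calc (2:ℝ) = 2^1 := by norm_num
                _ ≤ 2^j := by apply pow_le_pow_right₀ (by norm_num) hj1) (by positivity)
    have hterm : ∀ p ∈ P.filter (fun p => Nat.log 2 p = j), 1/(p:ℝ) ≤ ((2:ℝ)^j)⁻¹ := by
      intro p hp
      have hmem := hsub hp
      simp only [Finset.mem_filter] at hmem
      have hlow := hmem.2.2.1
      rw [one_div]
      apply inv_anti₀ h2j hlow
    calc ∑ p ∈ P.filter (fun p => Nat.log 2 p = j), 1/(p:ℝ)
        ≤ (P.filter (fun p => Nat.log 2 p = j)).card • ((2:ℝ)^j)⁻¹ :=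
          Finset.sum_le_card_nsmul _ _ _ hterm
      _ = ((P.filter (fun p => Nat.log 2 p = j)).card : ℝ) * ((2:ℝ)^j)⁻¹ := by
          rw [nsmul_eq_mul]
      _ ≤ ((2:ℝ)^(j+1) * Real.log 4 / Real.log ((2:ℝ)^j)) * ((2:ℝ)^j)⁻¹ :=
          mul_le_mul_of_nonneg_right hcard (by positivity)
      _ = 4 / (j:ℝ) := by
          have h4 : Real.log 4 = 2 * Real.log 2 := by
            rw [show (4:ℝ) = 2^2 by norm_num, Real.log_pow]
            push_cast; ring
          rw [h4, Real.log_pow, pow_succ]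
          have hjne : (j:ℝ) ≠ 0 := ne_of_gt hj0
          have hlne : Real.log 2 ≠ 0 := ne_of_gt hlog2
          have h2ne : (2:ℝ)^j ≠ 0 := ne_of_gt h2j
          field_simp
          ring
  set a := ⌈β⌉₊ - 1 with ha
  set b := ⌊Real.exp 1 * β⌋₊ with hb
  have hceil_ge : (β:ℝ) ≤ (⌈β⌉₊ : ℝ) := Nat.le_ceil β
  have hceil_lt : ((⌈β⌉₊:ℕ) : ℝ) < β + 1 := Nat.ceil_lt_add_one hβ0.le
  have hceil1 : 1 ≤ ⌈β⌉₊ := by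
    have : (1:ℝ) ≤ (⌈β⌉₊ : ℝ) := by linarith
    exact_mod_cast this
  have hacast : (a : ℝ) = (⌈β⌉₊ : ℝ) - 1 := by
    rw [ha]
    push_cast [Nat.cast_sub hceil1]
    ring
  have ha52 : (52:ℝ) ≤ (a:ℝ) := by rw [hacast]; linarith
  have ha1 : 1 ≤ a := by
    have : (1:ℝ) ≤ (a:ℝ) := by linarith
    exact_mod_cast this
  have hJsub : J ⊆ Finset.Icc a b := by
    intro j hj
    simp only [hJ, Finset.mem_filter, Finset.mem_Icc] at hj
    rw [Finset.mem_Icc]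
    constructor
    · have : (a:ℝ) < (j:ℝ) + 1 := by rw [hacast]; linarith [hj.2.1]
      have := this
      have hlt : a < j + 1 := by exact_mod_cast this
      omega
    · exact Nat.le_floor hj.2.2
  calc ∑ p ∈ P, 1/(p:ℝ) = ∑ j ∈ J, ∑ p ∈ P.filter (fun p => Nat.log 2 p = j), 1/(p:ℝ) := hsplit
    _ ≤ ∑ j ∈ J, 4/(j:ℝ) := Finset.sum_le_sum hblock
    _ ≤ ∑ j ∈ Finset.Icc a b, 4/(j:ℝ) := by
        apply Finset.sum_le_sum_of_subset_of_nonneg hJsub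
        intro i hi _
        positivity
    _ ≤ 8 := by
        rcases Nat.lt_or_ge b a with hba | hab
        · rw [Finset.Icc_eq_empty (by omega)]
          norm_num
        · have hstep : ∀ j ∈ Finset.Icc a b, 4/(j:ℝ) ≤ 4 * (Real.log j - Real.log ((j-1:ℕ):ℝ)) := by
            intro j hj
            rw [Finset.mem_Icc] at hj
            have hj52 : (52:ℝ) ≤ (j:ℝ) := by
              have : a ≤ j := hj.1
              have : (a:ℝ) ≤ (j:ℝ) := by exact_mod_cast this
              linarith
            have hj1 : (1:ℕ) ≤ j := by
              have : (1:ℝ) ≤ (j:ℝ) := by linarith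
              exact_mod_cast this
            have hjcast : ((j-1:ℕ):ℝ) = (j:ℝ) - 1 := by
              push_cast [Nat.cast_sub hj1]
              ring
            have hpos : (0:ℝ) < (j:ℝ) - 1 := by linarith
            have hjpos : (0:ℝ) < (j:ℝ) := by linarith
            have hlog : Real.log (((j:ℝ)-1)/(j:ℝ)) ≤ ((j:ℝ)-1)/(j:ℝ) - 1 :=
              Real.log_le_sub_one_of_pos (by positivity)
            rw [Real.log_div (ne_of_gt hpos) (ne_of_gt hjpos)] at hlog
            have h1j : ((j:ℝ)-1)/(j:ℝ) - 1 = -(1/(j:ℝ)) := by field_simp; ring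
            rw [h1j] at hlog
            rw [hjcast]
            have : 1/(j:ℝ) ≤ Real.log (j:ℝ) - Real.log ((j:ℝ)-1) := by linarith
            calc 4/(j:ℝ) = 4 * (1/(j:ℝ)) := by ring
              _ ≤ 4 * (Real.log (j:ℝ) - Real.log ((j:ℝ)-1)) := by linarith
          calc ∑ j ∈ Finset.Icc a b, 4/(j:ℝ)
              ≤ ∑ j ∈ Finset.Icc a b, 4 * (Real.log j - Real.log ((j-1:ℕ):ℝ)) :=
                Finset.sum_le_sum hstep
            _ = 4 * (Real.log b - Real.log ((a-1:ℕ):ℝ)) := by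
                rw [← Finset.mul_sum, aux_tel a b ha1 hab]
            _ ≤ 8 := by
                have hbcast : (b:ℝ) ≤ Real.exp 1 * β := Nat.floor_le (by positivity)
                have ha1cast : ((a-1:ℕ):ℝ) = (a:ℝ) - 1 := by
                  push_cast [Nat.cast_sub ha1]
                  ring
                have ha51 : (51:ℝ) ≤ ((a-1:ℕ):ℝ) := by rw [ha1cast]; linarith
                have hb0 : (0:ℝ) < (b:ℝ) := by
                  have : (a:ℝ) ≤ (b:ℝ) := by exact_mod_cast hab
                  linarith
                have hβ2 : β - 2 ≤ ((a-1:ℕ):ℝ) := by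
                  rw [ha1cast, hacast]
                  linarith
                have h1 : Real.log (b:ℝ) ≤ Real.log (Real.exp 1 * β) :=
                  Real.log_le_log hb0 hbcast
                have h2 : Real.log (β - 2) ≤ Real.log ((a-1:ℕ):ℝ) :=
                  Real.log_le_log (by linarith) hβ2
                have h3 : Real.log (Real.exp 1 * β) = 1 + Real.log β := by
                  rw [Real.log_mul (Real.exp_ne_zero 1) (ne_of_gt hβ0), Real.log_exp]
                have h4 : Real.log β - Real.log (β - 2) ≤ 1 := by
                  have hd : Real.log (β / (β - 2)) ≤ β/(β-2) - 1 :=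
                    Real.log_le_sub_one_of_pos (by
                      apply div_pos hβ0
                      linarith)
                  rw [Real.log_div (ne_of_gt hβ0) (by intro h; rw [sub_eq_zero] at h; linarith)] at hd
                  have : β/(β-2) - 1 = 2/(β-2) := by
                    rw [div_sub_one (by intro h; rw [sub_eq_zero] at h; linarith)]
                    ring_nf
                  rw [this] at hd
                  have : 2/(β-2) ≤ 1 := by
                    rw [div_le_one (by linarith)]
                    linarith
                  linarith
                linarith

lemma aux_prod_exp (P : Finset ℕ) (hP : ∀ p ∈ P, Nat.Prime p ∧ (10:ℝ) ≤ (p:ℝ)) :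
    ∏ p ∈ P, (1 - 5/(p:ℝ))⁻¹ ≤ Real.exp (10 * ∑ p ∈ P, 1/(p:ℝ)) := by
  have h10 : (10:ℝ) * ∑ p ∈ P, 1/(p:ℝ) = ∑ p ∈ P, 10 * (1/(p:ℝ)) := Finset.mul_sum _ _ _
  rw [h10, Real.exp_sum]
  apply Finset.prod_le_prod
  · intro p hp
    have hp10 := (hP p hp).2
    have ht : 5/(p:ℝ) ≤ 1/2 := by
      rw [div_le_div_iff₀ (by linarith) (by norm_num)]
      linarith
    have ht0 : (0:ℝ) ≤ 5/(p:ℝ) := by positivity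
    have h2 : (0:ℝ) < 1 - 5/(p:ℝ) := by linarith
    positivity
  · intro p hp
    have hp10 := (hP p hp).2
    set t := 5/(p:ℝ) with htdef
    have ht : t ≤ 1/2 := by
      rw [htdef, div_le_div_iff₀ (by linarith) (by norm_num)]
      linarith
    have ht0 : (0:ℝ) ≤ t := by positivity
    have h2 : (0:ℝ) < 1 - t := by linarith
    have hexp : 1 + 2*t ≤ Real.exp (2*t) := by
      have := Real.add_one_le_exp (2*t)
      linarith
    have hA : (1-t)⁻¹ ≤ 1 + 2*t := by
      rw [inv_eq_one_div, div_le_iff₀ h2]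
      nlinarith
    have : 10 * (1/(p:ℝ)) = 2 * t := by rw [htdef]; ring
    rw [this]
    linarith

lemma aux_cubic (u : ℝ) (hu : 0 ≤ u) : u - u^3/270 ≤ 7 := by
  nlinarith [sq_nonneg (u - 9), sq_nonneg u, sq_nonneg (u-15), mul_nonneg hu (sq_nonneg (u-9))]

lemma aux_exp_cubic (u : ℝ) (hu : 0 ≤ u) : u^3/27 ≤ Real.exp u := by
  have h1 : u/3 ≤ Real.exp (u/3) := by
    have := Real.add_one_le_exp (u/3)
    linarith
  have h2 : (u/3)^3 ≤ (Real.exp (u/3))^3 := by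
    apply pow_le_pow_left₀ (by positivity) h1
  rw [← Real.exp_nat_mul] at h2
  norm_num at h2
  rw [show (3:ℝ) * (u/3) = u by ring] at h2
  calc u^3/27 = (u/3)^3 := by ring
    _ ≤ Real.exp u := h2

lemma aux_log2_5 : Real.log 2 - Real.log 5 / 2 ≤ -(1/10) := by
  have h1 : Real.exp (1/5 : ℝ) ≤ 5/4 := by
    have := Real.add_one_le_exp (-(1/5) : ℝ)
    have h2 : (4/5 : ℝ) ≤ Real.exp (-(1/5)) := by linarith
    have h3 := Real.exp_pos (-(1/5) : ℝ)
    have h4 : Real.exp (1/5 : ℝ) * Real.exp (-(1/5) : ℝ) = 1 := by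
      rw [← Real.exp_add]; norm_num
    nlinarith [Real.exp_pos (1/5 : ℝ)]
  have h2 : (1/5 : ℝ) ≤ Real.log (5/4) := by
    rw [← Real.log_exp (1/5 : ℝ)]
    exact Real.log_le_log (Real.exp_pos _) h1
  have h3 : Real.log (5/4 : ℝ) = Real.log 5 - Real.log 4 := by
    rw [Real.log_div (by norm_num) (by norm_num)]
  have h4 : Real.log (4:ℝ) = 2 * Real.log 2 := by
    rw [show (4:ℝ) = 2^2 by norm_num, Real.log_pow]
    push_cast; ring
  rw [h3, h4] at h2
  linarith

lemma aux_log4 : Real.log 4 ≤ 2 := by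
  rw [← Real.log_exp 2]
  apply Real.log_le_log (by norm_num)
  have h1 : (2.7:ℝ) ≤ Real.exp 1 := by
    have := Real.exp_one_gt_d9
    linarith
  have : Real.exp 2 = Real.exp 1 * Real.exp 1 := by rw [← Real.exp_add]; norm_num
  nlinarith

lemma aux_log5 : Real.log 5 ≤ 2 := by
  rw [← Real.log_exp 2]
  apply Real.log_le_log (by norm_num)
  have h1 : (2.7:ℝ) ≤ Real.exp 1 := by
    have := Real.exp_one_gt_d9
    linarith
  have : Real.exp 2 = Real.exp 1 * Real.exp 1 := by rw [← Real.exp_add]; norm_num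
  nlinarith

lemma aux_exp5 : (100:ℝ) ≤ Real.exp 5 := by
  have h1 : (2.7:ℝ) ≤ Real.exp 1 := by
    have := Real.exp_one_gt_d9
    linarith
  have h2 : (2.7:ℝ)^5 ≤ (Real.exp 1)^5 := pow_le_pow_left₀ (by norm_num) h1 5
  rw [← Real.exp_nat_mul] at h2
  norm_num at h2 ⊢
  linarith

lemma aux_exp4 : (53:ℝ) ≤ Real.exp 4 := by
  have h1 : (2.7:ℝ) ≤ Real.exp 1 := by
    have := Real.exp_one_gt_d9
    linarith
  have h2 : (2.7:ℝ)^4 ≤ (Real.exp 1)^4 := pow_le_pow_left₀ (by norm_num) h1 4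
  rw [← Real.exp_nat_mul] at h2
  norm_num at h2 ⊢
  linarith

set_option maxHeartbeats 4000000 in
/-- **Number Theory Result 1, second part.** For any large `x` and any
integer `0 ≤ k ≤ log log x − 5`, the number of integers `d ≤ x` all of whose
prime factors lie in `[x^{e^{−(k+1)}}, x^{e^{−k}}]` is at most
`C · 2^{−e^k} · x / log x` for an absolute constant `C`. -/
theorem count_integers_with_prime_factors_in_band :
    ∃ C : ℝ, 0 < C ∧ ∃ x₀ : ℝ, ∀ x : ℝ, x₀ ≤ x →
      ∀ k : ℕ, (k : ℝ) ≤ Real.log (Real.log x) - 5 →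
      (((Finset.Icc 1 ⌊x⌋₊).filter
          (fun d : ℕ => ∀ p : ℕ, p.Prime → p ∣ d →
            x ^ (Real.exp (-((k : ℝ) + 1))) ≤ (p : ℝ) ∧
            (p : ℝ) ≤ x ^ (Real.exp (-(k : ℝ))))).card : ℝ)
        ≤ C * (2 : ℝ) ^ (-(Real.exp (k : ℝ))) * x / Real.log x := by
  refine ⟨Real.exp 100, Real.exp_pos _, Real.exp (Real.exp 5), fun x hx k hk => ?_⟩
  have hx1 : (1:ℝ) < x := by
    have : (1:ℝ) < Real.exp (Real.exp 5) := by
      rw [show (1:ℝ) = Real.exp 0 by rw [Real.exp_zero]]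
      exact Real.exp_lt_exp.mpr (Real.exp_pos 5)
    linarith
  have hx0 : (0:ℝ) < x := by linarith
  set L := Real.log x with hL
  have hL5 : Real.exp 5 ≤ L := by
    rw [hL, ← Real.log_exp (Real.exp 5)]
    exact Real.log_le_log (Real.exp_pos _) hx
  have hL0 : (0:ℝ) < L := lt_of_lt_of_le (Real.exp_pos 5) hL5
  have hLk : Real.exp ((k:ℝ)+5) ≤ L := by
    have h1 : (k:ℝ) + 5 ≤ Real.log L := by rw [hL]; linarith [hk]
    calc Real.exp ((k:ℝ)+5) ≤ Real.exp (Real.log L) := Real.exp_le_exp.mpr h1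
      _ = L := Real.exp_log hL0
  set y := x ^ (Real.exp (-((k:ℝ) + 1))) with hy
  set z := x ^ (Real.exp (-(k:ℝ))) with hz
  have hy0 : (0:ℝ) < y := Real.rpow_pos_of_pos hx0 _
  have hz0 : (0:ℝ) < z := Real.rpow_pos_of_pos hx0 _
  have hlogy : Real.log y = Real.exp (-((k:ℝ)+1)) * L := by rw [hy, Real.log_rpow hx0]
  have hlogz : Real.log z = Real.exp (-(k:ℝ)) * L := by rw [hz, Real.log_rpow hx0]
  have hlogy4 : Real.exp 4 ≤ Real.log y := by
    rw [hlogy]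
    have h1 : Real.exp 4 = Real.exp (-((k:ℝ)+1)) * Real.exp ((k:ℝ)+5) := by
      rw [← Real.exp_add]; ring_nf
    rw [h1]
    exact mul_le_mul_of_nonneg_left hLk (Real.exp_pos _).le
  have hzy : Real.log z = Real.exp 1 * Real.log y := by
    rw [hlogz, hlogy, ← mul_assoc, ← Real.exp_add]
    ring_nf
  have hlogy0 : (0:ℝ) < Real.log y := lt_of_lt_of_le (Real.exp_pos 4) hlogy4
  have hy53 : (53:ℝ) ≤ y := by
    calc (53:ℝ) ≤ Real.exp 4 := aux_exp4
      _ ≤ Real.exp (Real.log y) := by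
          apply Real.exp_le_exp.mpr
          calc (4:ℝ) ≤ Real.exp 4 := by nlinarith [aux_exp4]
            _ ≤ Real.log y := hlogy4
      _ = y := Real.exp_log hy0
  have hz_le_x : z ≤ x := by
    rw [hz]
    calc x ^ (Real.exp (-(k:ℝ))) ≤ x ^ (1:ℝ) := by
          apply Real.rpow_le_rpow_of_exponent_le hx1.le
          rw [show (1:ℝ) = Real.exp 0 by rw [Real.exp_zero]]
          apply Real.exp_le_exp.mpr
          simp
      _ = x := Real.rpow_one x
  set N := ⌊x⌋₊ with hN
  set S := (Finset.Icc 1 N).filter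
      (fun d : ℕ => ∀ p : ℕ, p.Prime → p ∣ d → y ≤ (p:ℝ) ∧ (p:ℝ) ≤ z) with hS
  -- the band prime set
  set PS := (Finset.Icc 1 N).filter (fun p => Nat.Prime p ∧ y ≤ (p:ℝ) ∧ (p:ℝ) ≤ z) with hPS
  have hPSfacts : ∀ p ∈ PS, Nat.Prime p ∧ (10:ℝ) ≤ (p:ℝ) := by
    intro p hp
    have := (Finset.mem_filter.mp hp).2
    exact ⟨this.1, by linarith [this.2.1]⟩
  have hB : ∑ p ∈ PS, 1/(p:ℝ) ≤ 8 := by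
    rw [hPS]; exact aux_recip_sum N y z hy0 hlogy4 hzy
  have hprod : ∏ p ∈ PS, (1 - 5/(p:ℝ))⁻¹ ≤ Real.exp 80 := by
    calc ∏ p ∈ PS, (1 - 5/(p:ℝ))⁻¹ ≤ Real.exp (10 * ∑ p ∈ PS, 1/(p:ℝ)) :=
          aux_prod_exp PS hPSfacts
      _ ≤ Real.exp 80 := by
          apply Real.exp_le_exp.mpr
          linarith
  set s := Real.exp (k:ℝ) with hs
  have hs1 : (1:ℝ) ≤ s := by
    rw [hs, show (1:ℝ) = Real.exp 0 by rw [Real.exp_zero]]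
    apply Real.exp_le_exp.mpr
    positivity
  set E := (Finset.Icc 1 N).filter
      (fun e => (∀ q : ℕ, q.Prime → q ∣ e → q ∈ PS) ∧ s/2 - 1 ≤ (Ω e : ℝ)) with hE
  -- sum of ff over E
  have hEsum : ∑ e ∈ E, ff e ≤ Real.exp 80 := by
    have hsub : E ⊆ (Finset.Icc 1 N).filter (fun e => ∀ q : ℕ, q.Prime → q ∣ e → q ∈ PS) := by
      intro e he
      simp only [hE, Finset.mem_filter] at he ⊢
      exact ⟨he.1, he.2.1⟩
    calc ∑ e ∈ E, ff e
        ≤ ∑ e ∈ (Finset.Icc 1 N).filter (fun e => ∀ q : ℕ, q.Prime → q ∣ e → q ∈ PS), ff e :=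
          Finset.sum_le_sum_of_subset_of_nonneg hsub (fun i _ _ => ff_nonneg i)
      _ ≤ ∏ p ∈ PS, (1 - 5/(p:ℝ))⁻¹ := aux_euler N PS hPSfacts
      _ ≤ Real.exp 80 := hprod
  have hEsum2 : ∑ e ∈ E, 1/(e:ℝ) ≤ (5:ℝ)^(1 - s/2) * Real.exp 80 := by
    have hterm : ∀ e ∈ E, 1/(e:ℝ) ≤ (5:ℝ)^(1 - s/2) * ff e := by
      intro e he
      simp only [hE, Finset.mem_filter, Finset.mem_Icc] at he
      have he1 : 1 ≤ e := he.1.1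
      have he0 : (0:ℝ) < (e:ℝ) := by exact_mod_cast he1
      have hΩ : s/2 - 1 ≤ (Ω e : ℝ) := he.2.2
      have h5 : (5:ℝ)^(s/2 - 1) ≤ (5:ℝ)^((Ω e : ℝ)) := by
        apply Real.rpow_le_rpow_of_exponent_le (by norm_num) hΩ
      have h5' : (5:ℝ)^((Ω e:ℕ):ℝ) = (5:ℝ)^(Ω e : ℕ) := Real.rpow_natCast 5 (Ω e)
      have hkey : (1:ℝ) ≤ (5:ℝ)^(1 - s/2) * (5:ℝ)^(Ω e : ℕ) := by
        rw [← h5']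
        rw [← Real.rpow_add (by norm_num)]
        calc (1:ℝ) = (5:ℝ)^(0:ℝ) := (Real.rpow_zero 5).symm
          _ ≤ (5:ℝ)^(1 - s/2 + (Ω e:ℝ)) := by
              apply Real.rpow_le_rpow_of_exponent_le (by norm_num)
              linarith
      unfold ff
      rw [div_le_iff₀ he0] at *
      calc (1:ℝ) ≤ (5:ℝ)^(1 - s/2) * (5:ℝ)^(Ω e : ℕ) := hkey
        _ = (5:ℝ)^(1 - s/2) * ((5:ℝ)^(Ω e:ℕ) / (e:ℝ)) * (e:ℝ) := by
            field_simp
    calc ∑ e ∈ E, 1/(e:ℝ) ≤ ∑ e ∈ E, (5:ℝ)^(1 - s/2) * ff e := Finset.sum_le_sum hterm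
      _ = (5:ℝ)^(1 - s/2) * ∑ e ∈ E, ff e := by rw [Finset.mul_sum]
      _ ≤ (5:ℝ)^(1 - s/2) * Real.exp 80 := by
          apply mul_le_mul_of_nonneg_left hEsum
          positivity

  -- basic largeness
  have hx100 : (101:ℝ) ≤ x := by
    have h1 : Real.exp 5 + 1 ≤ Real.exp (Real.exp 5) := Real.add_one_le_exp _
    have := aux_exp5
    linarith
  have hsqrt2 : (2:ℝ) ≤ Real.sqrt x := by
    have h4 : Real.sqrt 4 ≤ Real.sqrt x := Real.sqrt_le_sqrt (by linarith)
    have : Real.sqrt 4 = 2 := by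
      rw [show (4:ℝ) = 2^2 by norm_num, Real.sqrt_sq (by norm_num : (0:ℝ) ≤ 2)]
    linarith
  -- prime-counting finsets
  set Pe : ℕ → Finset ℕ := fun e => (Finset.Icc 1 N).filter
      (fun p => Nat.Prime p ∧ y ≤ (p:ℝ) ∧ (p:ℝ) * (e:ℝ) ≤ x) with hPe
  -- S₂ is covered by products p * e
  have hsub2 : S.filter (fun d : ℕ => Real.sqrt x < (d:ℝ)) ⊆
      E.biUnion (fun e => (Pe e).image (fun p => p * e)) := by
    intro d hd
    simp only [Finset.mem_filter, hS, Finset.mem_Icc] at hd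
    obtain ⟨⟨⟨hd1, hdN⟩, hband⟩, hgt⟩ := hd
    have hd2 : 2 < (d:ℝ) := lt_of_le_of_lt hsqrt2 hgt
    have hd2' : 2 ≤ d := by exact_mod_cast hd2.le.trans (le_refl _) |>.trans (le_refl _)
    have hd0 : d ≠ 0 := by omega
    have hdne1 : d ≠ 1 := by
      intro h
      rw [h] at hd2
      norm_num at hd2
    have hdx : (d:ℝ) ≤ x := by
      calc (d:ℝ) ≤ (N:ℝ) := by exact_mod_cast hdN
        _ ≤ x := Nat.floor_le hx0.le
    set p := d.minFac with hpdef
    have hp : p.Prime := Nat.minFac_prime hdne1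
    have hpd : p ∣ d := Nat.minFac_dvd d
    have hpband := hband p hp hpd
    set e := d / p with hedef
    have hed : e * p = d := Nat.div_mul_cancel hpd
    have he0 : e ≠ 0 := by
      intro h
      rw [h, zero_mul] at hed
      exact hd0 hed.symm
    have he1 : 1 ≤ e := Nat.one_le_iff_ne_zero.mpr he0
    have heN : e ≤ N := le_trans (Nat.div_le_self d p) hdN
    have heddvd : e ∣ d := ⟨p, hed.symm⟩
    have hqe : ∀ q : ℕ, q.Prime → q ∣ e → q ∈ PS := by
      intro q hq hqe'
      have hqd : q ∣ d := hqe'.trans heddvd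
      have hqband := hband q hq hqd
      have hqN : q ≤ N := by
        apply Nat.le_floor
        calc (q:ℝ) ≤ z := hqband.2
          _ ≤ x := hz_le_x
      simp only [hPS, Finset.mem_filter, Finset.mem_Icc]
      exact ⟨⟨hq.one_lt.le, hqN⟩, hq, hqband⟩
    -- Ω d is large
    have hΩd : s/2 < (Ω d : ℝ) := by
      have hdz : (d:ℝ) ≤ z ^ (Ω d) := by
        have hlistN : d.primeFactorsList.prod ≤ ⌊z⌋₊ ^ d.primeFactorsList.length := by
          apply List.prod_le_pow_card
          intro q hqmem
          apply Nat.le_floor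
          exact (hband q (Nat.prime_of_mem_primeFactorsList hqmem)
            (Nat.dvd_of_mem_primeFactorsList hqmem)).2
        have hprodd : d.primeFactorsList.prod = d := Nat.prod_primeFactorsList hd0
        rw [hprodd] at hlistN
        have hΩlen : Ω d = d.primeFactorsList.length := ArithmeticFunction.cardFactors_apply
        calc (d:ℝ) ≤ ((⌊z⌋₊ ^ d.primeFactorsList.length : ℕ) : ℝ) := by exact_mod_cast hlistN
          _ = ((⌊z⌋₊:ℝ)) ^ d.primeFactorsList.length := by push_cast; ring
          _ ≤ z ^ d.primeFactorsList.length := by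
              apply pow_le_pow_left₀ (by positivity) (Nat.floor_le hz0.le)
          _ = z ^ (Ω d) := by rw [hΩlen]
      have hlt : Real.sqrt x < z ^ (Ω d) := lt_of_lt_of_le hgt hdz
      have hlog : L / 2 < (Ω d : ℝ) * Real.log z := by
        have := Real.log_lt_log (Real.sqrt_pos.mpr hx0) hlt
        rwa [Real.log_sqrt hx0.le, Real.log_pow] at this
      rw [hlogz] at hlog
      have hsk : s * Real.exp (-(k:ℝ)) = 1 := by
        rw [hs, ← Real.exp_add]
        simp
      have hek0 : (0:ℝ) < Real.exp (-(k:ℝ)) := Real.exp_pos _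
      -- L/2 < Ωd * exp(-k) * L  ⇒  1/2 < Ωd * exp(-k) ⇒ s/2 < Ωd
      have h12 : 1/2 < (Ω d : ℝ) * Real.exp (-(k:ℝ)) := by
        by_contra hcon
        push_neg at hcon
        have : (Ω d : ℝ) * (Real.exp (-(k:ℝ)) * L) ≤ 1/2 * L := by
          rw [← mul_assoc]
          exact mul_le_mul_of_nonneg_right hcon hL0.le
        linarith
      have hs0 : (0:ℝ) < s := by linarith
      have h13 : s * (1/2) < s * ((Ω d : ℝ) * Real.exp (-(k:ℝ))) :=
        mul_lt_mul_of_pos_left h12 hs0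
      have h14 : s * ((Ω d:ℝ) * Real.exp (-(k:ℝ))) = (Ω d:ℝ) := by
        rw [show s * ((Ω d:ℝ) * Real.exp (-(k:ℝ))) = (Ω d:ℝ) * (s * Real.exp (-(k:ℝ))) by ring,
          hsk, mul_one]
      rw [h14] at h13
      linarith
    have hΩmul : Ω d = Ω e + 1 := by
      rw [← hed, ArithmeticFunction.cardFactors_mul he0 hp.pos.ne',
        ArithmeticFunction.cardFactors_apply_prime hp]
    have hΩe : s/2 - 1 ≤ (Ω e : ℝ) := by
      have : (Ω d : ℝ) = (Ω e : ℝ) + 1 := by exact_mod_cast hΩmul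
      linarith
    have heE : e ∈ E := by
      simp only [hE, Finset.mem_filter, Finset.mem_Icc]
      exact ⟨⟨he1, heN⟩, hqe, hΩe⟩
    have hpPe : p ∈ Pe e := by
      simp only [hPe, Finset.mem_filter, Finset.mem_Icc]
      have hpled : p ≤ d := Nat.minFac_le (by omega)
      refine ⟨⟨hp.one_lt.le, le_trans hpled hdN⟩, hp, hpband.1, ?_⟩
      have : ((e * p : ℕ) : ℝ) = (e:ℝ) * (p:ℝ) := by push_cast; ring
      calc (p:ℝ) * (e:ℝ) = ((e * p : ℕ) : ℝ) := by push_cast; ring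
        _ = (d:ℝ) := by rw [hed]
        _ ≤ x := hdx
    apply Finset.mem_biUnion.mpr
    exact ⟨e, heE, Finset.mem_image.mpr ⟨p, hpPe, by rw [mul_comm]; exact hed⟩⟩
  -- counting S₂
  have hcard2 : ((S.filter (fun d : ℕ => Real.sqrt x < (d:ℝ))).card : ℝ) ≤
      ∑ e ∈ E, ((Pe e).card : ℝ) := by
    have h1 : (S.filter (fun d : ℕ => Real.sqrt x < (d:ℝ))).card ≤
        (E.biUnion (fun e => (Pe e).image (fun p => p * e))).card :=
      Finset.card_le_card hsub2
    have h2 : (E.biUnion (fun e => (Pe e).image (fun p => p * e))).card ≤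
        ∑ e ∈ E, ((Pe e).image (fun p => p * e)).card := Finset.card_biUnion_le
    have h3 : ∑ e ∈ E, ((Pe e).image (fun p => p * e)).card ≤ ∑ e ∈ E, (Pe e).card :=
      Finset.sum_le_sum (fun e _ => Finset.card_image_le)
    have := le_trans h1 (le_trans h2 h3)
    calc ((S.filter (fun d : ℕ => Real.sqrt x < (d:ℝ))).card : ℝ)
        ≤ ((∑ e ∈ E, (Pe e).card : ℕ) : ℝ) := by exact_mod_cast this
      _ = ∑ e ∈ E, ((Pe e).card : ℝ) := by push_cast; ring
  have hPe_bound : ∀ e ∈ E, ((Pe e).card : ℝ) ≤ (x * Real.log 4 / Real.log y) * (1/(e:ℝ)) := by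
    intro e he
    simp only [hE, Finset.mem_filter, Finset.mem_Icc] at he
    have he1 : 1 ≤ e := he.1.1
    have he0 : (0:ℝ) < (e:ℝ) := by exact_mod_cast he1
    have hsubc : Pe e ⊆ (Finset.Icc 1 N).filter
        (fun p => Nat.Prime p ∧ y ≤ (p:ℝ) ∧ (p:ℝ) ≤ x/(e:ℝ)) := by
      intro p hp
      simp only [hPe, Finset.mem_filter] at hp ⊢
      refine ⟨hp.1, hp.2.1, hp.2.2.1, ?_⟩
      rw [le_div_iff₀ he0]
      exact hp.2.2.2
    calc ((Pe e).card : ℝ)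
        ≤ (((Finset.Icc 1 N).filter
            (fun p => Nat.Prime p ∧ y ≤ (p:ℝ) ∧ (p:ℝ) ≤ x/(e:ℝ))).card : ℝ) := by
          exact_mod_cast Finset.card_le_card hsubc
      _ ≤ (x/(e:ℝ)) * Real.log 4 / Real.log y :=
          aux_cheb N y (x/(e:ℝ)) (by linarith) (by positivity)
      _ = (x * Real.log 4 / Real.log y) * (1/(e:ℝ)) := by
          field_simp
  have hmain2 : ((S.filter (fun d : ℕ => Real.sqrt x < (d:ℝ))).card : ℝ) ≤
      (x * Real.log 4 / Real.log y) * ((5:ℝ)^(1 - s/2) * Real.exp 80) := by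
    have hco : (0:ℝ) ≤ x * Real.log 4 / Real.log y := by
      have : (0:ℝ) ≤ Real.log 4 := Real.log_nonneg (by norm_num)
      positivity
    calc ((S.filter (fun d : ℕ => Real.sqrt x < (d:ℝ))).card : ℝ)
        ≤ ∑ e ∈ E, ((Pe e).card : ℝ) := hcard2
      _ ≤ ∑ e ∈ E, (x * Real.log 4 / Real.log y) * (1/(e:ℝ)) := Finset.sum_le_sum hPe_bound
      _ = (x * Real.log 4 / Real.log y) * ∑ e ∈ E, 1/(e:ℝ) := by rw [Finset.mul_sum]
      _ ≤ (x * Real.log 4 / Real.log y) * ((5:ℝ)^(1 - s/2) * Real.exp 80) :=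
          mul_le_mul_of_nonneg_left hEsum2 hco
  -- counting S₁
  have hmain1 : ((S.filter (fun d : ℕ => ¬ Real.sqrt x < (d:ℝ))).card : ℝ) ≤ Real.sqrt x := by
    have hsub1 : S.filter (fun d : ℕ => ¬ Real.sqrt x < (d:ℝ)) ⊆ Finset.Icc 1 ⌊Real.sqrt x⌋₊ := by
      intro d hd
      simp only [Finset.mem_filter, hS, Finset.mem_Icc, not_lt] at hd
      rw [Finset.mem_Icc]
      exact ⟨hd.1.1.1, Nat.le_floor hd.2⟩
    calc ((S.filter (fun d : ℕ => ¬ Real.sqrt x < (d:ℝ))).card : ℝ)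
        ≤ ((Finset.Icc 1 ⌊Real.sqrt x⌋₊).card : ℝ) := by
          exact_mod_cast Finset.card_le_card hsub1
      _ = (⌊Real.sqrt x⌋₊ : ℝ) := by rw [Nat.card_Icc]; simp
      _ ≤ Real.sqrt x := Nat.floor_le (Real.sqrt_nonneg x)
  -- split
  have hsplitS : (S.card : ℝ) =
      ((S.filter (fun d : ℕ => Real.sqrt x < (d:ℝ))).card : ℝ) +
      ((S.filter (fun d : ℕ => ¬ Real.sqrt x < (d:ℝ))).card : ℝ) := by
    have := Finset.card_filter_add_card_filter_not
      (s := S) (p := fun d : ℕ => Real.sqrt x < (d:ℝ))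
    exact_mod_cast this.symm
  -- numeric bound 1 : sqrt x ≤ 2^(-s) x / L
  have hbound1 : Real.sqrt x ≤ (2:ℝ)^(-s) * x / L := by
    have hlog2 : (0:ℝ) < Real.log 2 := Real.log_pos (by norm_num)
    have hlog2' : Real.log 2 ≤ 1 := by
      rw [← Real.log_exp 1]
      apply Real.log_le_log (by norm_num)
      have := Real.add_one_le_exp (1:ℝ)
      linarith
    have hsL : 100 * s ≤ L := by
      have h1 : s * Real.exp 5 = Real.exp ((k:ℝ)+5) := by
        rw [hs, ← Real.exp_add]
      nlinarith [aux_exp5, hLk, hs1]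
    have hA : Real.exp (s * Real.log 2) ≤ x ^ ((1:ℝ)/100) := by
      have h1 : s * Real.log 2 ≤ L * (1/100) := by nlinarith [hs1]
      calc Real.exp (s * Real.log 2) ≤ Real.exp (L * (1/100)) := Real.exp_le_exp.mpr h1
        _ = x ^ ((1:ℝ)/100) := by rw [Real.rpow_def_of_pos hx0]
    have hLx : L ≤ 4 * x ^ ((1:ℝ)/4) := by
      have h1 : Real.log (x ^ ((1:ℝ)/4)) ≤ x ^ ((1:ℝ)/4) - 1 :=
        Real.log_le_sub_one_of_pos (Real.rpow_pos_of_pos hx0 _)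
      rw [Real.log_rpow hx0] at h1
      linarith
    have hx425 : (4:ℝ) ≤ x ^ ((6:ℝ)/25) := by
      have h1 : Real.exp 100 ≤ x := le_trans (Real.exp_le_exp.mpr aux_exp5) hx
      have h2 : (Real.exp 100) ^ ((6:ℝ)/25) ≤ x ^ ((6:ℝ)/25) :=
        Real.rpow_le_rpow (Real.exp_pos _).le h1 (by norm_num)
      have h3 : (Real.exp 100) ^ ((6:ℝ)/25) = Real.exp 24 := by
        rw [Real.rpow_def_of_pos (Real.exp_pos _), Real.log_exp]
        norm_num
      rw [h3] at h2
      have h4 : (4:ℝ) ≤ Real.exp 24 := by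
        have := Real.add_one_le_exp (24:ℝ)
        linarith
      linarith
    have hkey : Real.sqrt x * (Real.exp (s * Real.log 2) * L) ≤ x := by
      have hs2 : Real.sqrt x = x ^ ((1:ℝ)/2) := by
        rw [Real.sqrt_eq_rpow]
      calc Real.sqrt x * (Real.exp (s * Real.log 2) * L)
          ≤ x ^ ((1:ℝ)/2) * (x ^ ((1:ℝ)/100) * (4 * x ^ ((1:ℝ)/4))) := by
            rw [hs2]
            have h0 : (0:ℝ) ≤ x ^ ((1:ℝ)/2) := (Real.rpow_pos_of_pos hx0 _).le
            have h1 : (0:ℝ) ≤ Real.exp (s * Real.log 2) := (Real.exp_pos _).le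
            apply mul_le_mul_of_nonneg_left _ h0
            apply mul_le_mul hA hLx hL0.le (Real.rpow_pos_of_pos hx0 _).le
        _ = 4 * x ^ ((19:ℝ)/25) := by
            rw [show x ^ ((1:ℝ)/2) * (x ^ ((1:ℝ)/100) * (4 * x ^ ((1:ℝ)/4)))
              = 4 * (x ^ ((1:ℝ)/2) * x ^ ((1:ℝ)/100) * x ^ ((1:ℝ)/4)) by ring,
              ← Real.rpow_add hx0, ← Real.rpow_add hx0]
            norm_num
        _ ≤ x ^ ((6:ℝ)/25) * x ^ ((19:ℝ)/25) := by
            apply mul_le_mul_of_nonneg_right hx425 (Real.rpow_pos_of_pos hx0 _).le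
        _ = x := by
            rw [← Real.rpow_add hx0]
            norm_num
    have hR : (2:ℝ)^(-s) * x / L = x / (Real.exp (s * Real.log 2) * L) := by
      rw [Real.rpow_def_of_pos (by norm_num : (0:ℝ) < 2),
        show Real.log 2 * (-s) = -(s * Real.log 2) by ring, Real.exp_neg]
      field_simp
    rw [hR, le_div_iff₀ (by positivity)]
    exact hkey
  -- numeric bound 2
  have hbound2 : (x * Real.log 4 / Real.log y) * ((5:ℝ)^(1 - s/2) * Real.exp 80)
      ≤ (Real.exp 100 - 1) * (2:ℝ)^(-s) * x / L := by
    have hxlogy : x * Real.log 4 / Real.log y = x / L * (Real.log 4 * Real.exp ((k:ℝ)+1)) := by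
      rw [hlogy, Real.exp_neg]
      field_simp
    have hcoef : Real.log 4 * Real.exp ((k:ℝ)+1) * ((5:ℝ)^(1 - s/2) * Real.exp 80)
        ≤ (Real.exp 100 - 1) * (2:ℝ)^(-s) := by
      have h5e : (5:ℝ)^(1 - s/2) = Real.exp (Real.log 5 * (1 - s/2)) :=
        Real.rpow_def_of_pos (by norm_num) _
      have h2e : (2:ℝ)^(-s) = Real.exp (Real.log 2 * (-s)) :=
        Real.rpow_def_of_pos (by norm_num) _
      have hB90 : ((k:ℝ)+1) + (Real.log 5 * (1 - s/2) + 80) + s * Real.log 2 ≤ 90 := by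
        have hcub : (k:ℝ) - s/10 ≤ 7 := by
          have h1 := aux_exp_cubic (k:ℝ) (Nat.cast_nonneg k)
          have h2 := aux_cubic (k:ℝ) (Nat.cast_nonneg k)
          rw [← hs] at h1
          nlinarith
        have hsp : (0:ℝ) ≤ s := by linarith
        have h4 : s * (Real.log 2 - Real.log 5/2) ≤ s * (-(1/10)) :=
          mul_le_mul_of_nonneg_left aux_log2_5 hsp
        have hexpand : ((k:ℝ)+1) + (Real.log 5 * (1 - s/2) + 80) + s * Real.log 2
            = (k:ℝ) + 81 + Real.log 5 + s * (Real.log 2 - Real.log 5/2) := by ring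
        rw [hexpand]
        have := aux_log5
        nlinarith
      rw [h5e, h2e]
      have hcomb : Real.exp ((k:ℝ)+1) * (Real.exp (Real.log 5 * (1 - s/2)) * Real.exp 80)
          = Real.exp (((k:ℝ)+1) + (Real.log 5 * (1 - s/2) + 80)) := by
        rw [← Real.exp_add, ← Real.exp_add]
      rw [mul_assoc, hcomb]
      have hmono : Real.exp (((k:ℝ)+1) + (Real.log 5 * (1 - s/2) + 80))
          ≤ Real.exp 90 * Real.exp (Real.log 2 * (-s)) := by
        rw [← Real.exp_add]
        apply Real.exp_le_exp.mpr
        linarith [hB90]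
      have h2exp : 2 * Real.exp 90 ≤ Real.exp 100 - 1 := by
        have ha : Real.exp 100 = Real.exp 90 * Real.exp 10 := by rw [← Real.exp_add]; norm_num
        have hb : (11:ℝ) ≤ Real.exp 10 := by
          have := Real.add_one_le_exp (10:ℝ)
          linarith
        have hc : (1:ℝ) ≤ Real.exp 90 := Real.one_le_exp (by norm_num)
        have hd : Real.exp 90 * 11 ≤ Real.exp 90 * Real.exp 10 :=
          mul_le_mul_of_nonneg_left hb (Real.exp_pos _).le
        linarith
      calc Real.log 4 * Real.exp (((k:ℝ)+1) + (Real.log 5 * (1 - s/2) + 80))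
          ≤ 2 * Real.exp (((k:ℝ)+1) + (Real.log 5 * (1 - s/2) + 80)) :=
            mul_le_mul_of_nonneg_right aux_log4 (Real.exp_pos _).le
        _ ≤ 2 * (Real.exp 90 * Real.exp (Real.log 2 * (-s))) :=
            mul_le_mul_of_nonneg_left hmono (by norm_num)
        _ = 2 * Real.exp 90 * Real.exp (Real.log 2 * (-s)) := by ring
        _ ≤ (Real.exp 100 - 1) * Real.exp (Real.log 2 * (-s)) :=
            mul_le_mul_of_nonneg_right h2exp (Real.exp_pos _).le
    calc (x * Real.log 4 / Real.log y) * ((5:ℝ)^(1 - s/2) * Real.exp 80)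
        = (x / L) * (Real.log 4 * Real.exp ((k:ℝ)+1) * ((5:ℝ)^(1 - s/2) * Real.exp 80)) := by
          rw [hxlogy]; ring
      _ ≤ (x / L) * ((Real.exp 100 - 1) * (2:ℝ)^(-s)) := by
          apply mul_le_mul_of_nonneg_left hcoef (by positivity)
      _ = (Real.exp 100 - 1) * (2:ℝ)^(-s) * x / L := by ring
  -- final assembly
  have hfinal : (S.card : ℝ) ≤ Real.exp 100 * (2:ℝ)^(-s) * x / L := by
    have hone : Real.exp 100 * (2:ℝ)^(-s) * x / L
        = (2:ℝ)^(-s) * x / L + (Real.exp 100 - 1) * (2:ℝ)^(-s) * x / L := by ring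
    rw [hsplitS, hone]
    have := le_trans hmain2 hbound2
    linarith [le_trans hmain1 hbound1, this]
  exact hfinal
end

section
/- Let f be a Steinhaus random multiplicative function. For any reals 400 ≤ x ≤ y and any σ ≥ −1/log y, E ∏_{x < p ≤ y} |1 − f(p)/p^{1/2+σ}|^{−2} = exp{ ∑_{x < p ≤ y} 1/p^{1+2σ} + O(1/(√x log x)) }. The same estimate holds with the exponent −2 replaced by 2. -/
open MeasureTheory ProbabilityTheory Complex

section Aux

open intervalIntegral Metric

private lemma poisson_aux (z : ℂ) (hz : ‖z‖ < 1) :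
    (∫ t in (0:ℝ)..(2*Real.pi), (Complex.normSq (1 - z * Complex.exp (t * Complex.I)))⁻¹)
      = 2*Real.pi / (1 - Complex.normSq z) := by
  have hz1 : ∀ w : ℂ, w ∈ closedBall (0:ℂ) 1 → 1 - z * w ≠ 0 := by
    intro w hw
    have : ‖z * w‖ < 1 := by
      rw [norm_mul]
      calc ‖z‖ * ‖w‖ ≤ ‖z‖ * 1 := by
            refine mul_le_mul_of_nonneg_left ?_ (norm_nonneg _)
            simpa [Metric.mem_closedBall, dist_eq_norm] using hw
        _ < 1 := by simpa using hz
    intro h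
    rw [sub_eq_zero] at h
    rw [← h] at this
    simp at this
  have hdiff : DiffContOnCl ℂ (fun w => (1 - z * w)⁻¹) (ball (0:ℂ) 1) := by
    have hne : ∀ w ∈ closedBall (0:ℂ) 1, 1 - z * w ≠ 0 := hz1
    constructor
    · apply DifferentiableOn.inv
      · exact (differentiableOn_const _).sub ((differentiableOn_const z).mul differentiableOn_id)
      · exact fun w hw => hz1 w (ball_subset_closedBall hw)
    · rw [closure_ball (0:ℂ) one_ne_zero]
      apply ContinuousOn.inv₀
      · exact (continuousOn_const.sub (continuousOn_const.mul continuousOn_id))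
      · exact hne
  have hmem : (starRingEnd ℂ) z ∈ ball (0:ℂ) 1 := by
    simpa [Metric.mem_ball, dist_eq_norm] using hz
  have hcauchy := hdiff.circleIntegral_sub_inv_smul hmem
  rw [circleIntegral] at hcauchy
  simp only [deriv_circleMap, circleMap, ofReal_one, one_mul, zero_add, smul_eq_mul] at hcauchy
  have key : ∀ t : ℝ, (Complex.exp (t * I) * I) *
      ((Complex.exp (t * I) - (starRingEnd ℂ) z)⁻¹ * (1 - z * Complex.exp (t * I))⁻¹)
      = I * ((Complex.normSq (1 - z * Complex.exp (t * I)) : ℝ) : ℂ)⁻¹ := by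
    intro t
    have he : Complex.exp (t * I) ≠ 0 := Complex.exp_ne_zero _
    have h1 : 1 - z * Complex.exp (t * I) ≠ 0 := by
      apply hz1
      simp [Metric.mem_closedBall, dist_eq_norm, Complex.norm_exp]
    have hconj : (starRingEnd ℂ) (1 - z * Complex.exp (t * I)) =
        (Complex.exp (t * I))⁻¹ * (Complex.exp (t * I) - (starRingEnd ℂ) z) := by
      have : (starRingEnd ℂ) (Complex.exp (t * I)) = (Complex.exp (t * I))⁻¹ := by
        rw [← Complex.exp_conj, ← Complex.exp_neg]
        congr 1
        simp [Complex.conj_I]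
      rw [map_sub, map_mul, this, map_one]
      field_simp
    have hns : ((Complex.normSq (1 - z * Complex.exp (t * I)) : ℝ) : ℂ)
        = (1 - z * Complex.exp (t * I)) * ((Complex.exp (t * I))⁻¹ *
            (Complex.exp (t * I) - (starRingEnd ℂ) z)) := by
      rw [← hconj, Complex.mul_conj]
    rw [hns]
    have h2 : Complex.exp (t * I) - (starRingEnd ℂ) z ≠ 0 := by
      intro h
      rw [sub_eq_zero] at h
      have : ‖(starRingEnd ℂ) z‖ = 1 := by rw [← h]; simp [Complex.norm_exp]
      rw [RCLike.norm_conj] at this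
      rw [this] at hz
      exact lt_irrefl _ hz
    field_simp
  have : (∫ t in (0:ℝ)..(2*Real.pi), I * ((Complex.normSq (1 - z * Complex.exp (t * I)) : ℝ) : ℂ)⁻¹)
      = (2 * Real.pi * I) * (1 - z * (starRingEnd ℂ) z)⁻¹ := by
    rw [← hcauchy]
    exact intervalIntegral.integral_congr fun t _ => (key t).symm
  rw [intervalIntegral.integral_const_mul] at this
  have hI : (I : ℂ) ≠ 0 := I_ne_zero
  have h3 : (∫ t in (0:ℝ)..(2*Real.pi), ((Complex.normSq (1 - z * Complex.exp (t * I)) : ℝ) : ℂ)⁻¹)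
      = (2 * Real.pi) * (1 - z * (starRingEnd ℂ) z)⁻¹ := by
    apply mul_left_cancel₀ hI
    rw [this]; ring
  have h4 : ∀ t : ℝ, ((Complex.normSq (1 - z * Complex.exp (t * I)) : ℝ) : ℂ)⁻¹
      = (((Complex.normSq (1 - z * Complex.exp (t * I)))⁻¹ : ℝ) : ℂ) := by
    intro t; push_cast; ring
  simp_rw [h4] at h3
  rw [intervalIntegral.integral_ofReal] at h3
  have h5 : z * (starRingEnd ℂ) z = ((Complex.normSq z : ℝ) : ℂ) := Complex.mul_conj z
  rw [h5] at h3
  have h6 : ((2*Real.pi / (1 - Complex.normSq z) : ℝ) : ℂ)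
      = (2 * Real.pi) * (1 - ((Complex.normSq z : ℝ) : ℂ))⁻¹ := by push_cast; ring
  exact_mod_cast h3.trans h6.symm

private lemma circle_plus (z : ℂ) :
    (∫ θ in (0:ℝ)..1, Complex.normSq (1 - z * Complex.exp (2*Real.pi*I*θ)))
      = 1 + Complex.normSq z := by
  have key : ∀ θ : ℝ, ((Complex.normSq (1 - z * Complex.exp (2*Real.pi*I*θ)) : ℝ) : ℂ)
      = (1 + (Complex.normSq z : ℝ)) - z * Complex.exp ((2*Real.pi*I)*θ)
        - (starRingEnd ℂ) z * Complex.exp ((-(2*Real.pi*I))*θ) := by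
    intro θ
    have hE : (starRingEnd ℂ) (Complex.exp (2*Real.pi*I*θ)) =
        Complex.exp (-(2*Real.pi*I*θ)) := by
      rw [← Complex.exp_conj]
      congr 1
      simp only [map_mul, Complex.conj_I, Complex.conj_ofReal, map_ofNat]
      ring
    have hne : Complex.exp (2*Real.pi*I*θ) ≠ 0 := Complex.exp_ne_zero _
    rw [← Complex.mul_conj, map_sub, map_mul, hE, map_one]
    have h1 : Complex.exp (-(2*Real.pi*I*θ)) = (Complex.exp (2*Real.pi*I*θ))⁻¹ :=
      Complex.exp_neg _
    have h2 : Complex.exp ((-(2*Real.pi*I))*θ) = (Complex.exp (2*Real.pi*I*θ))⁻¹ := by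
      rw [← Complex.exp_neg]; congr 1; ring
    have h3 : Complex.exp ((2*Real.pi*I)*θ) = Complex.exp (2*Real.pi*I*θ) := by ring_nf
    have h5 : z * (starRingEnd ℂ) z = ((Complex.normSq z : ℝ) : ℂ) := Complex.mul_conj z
    rw [h1, h2, h3]
    field_simp
    ring_nf
    rw [← h5]
    ring
  have hc1 : (2*Real.pi*I : ℂ) ≠ 0 := by
    simp [Real.pi_ne_zero, I_ne_zero]
  have hc2 : (-(2*Real.pi*I) : ℂ) ≠ 0 := neg_ne_zero.mpr hc1
  have i1 : IntervalIntegrable (fun θ : ℝ => z * Complex.exp ((2*Real.pi*I)*θ)) volume 0 1 :=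
    ((continuous_const.mul (Complex.continuous_exp.comp
      (continuous_const.mul Complex.continuous_ofReal))) : Continuous _).intervalIntegrable _ _
  have i2 : IntervalIntegrable (fun θ : ℝ =>
      (starRingEnd ℂ) z * Complex.exp ((-(2*Real.pi*I))*θ)) volume 0 1 :=
    ((continuous_const.mul (Complex.continuous_exp.comp
      (continuous_const.mul Complex.continuous_ofReal))) : Continuous _).intervalIntegrable _ _
  have h1 : (∫ θ in (0:ℝ)..1,
      ((Complex.normSq (1 - z * Complex.exp (2*Real.pi*I*θ)) : ℝ) : ℂ))
      = 1 + (Complex.normSq z : ℝ) := by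
    simp_rw [key]
    rw [intervalIntegral.integral_sub (((_root_.intervalIntegrable_const).sub i1)) i2,
      intervalIntegral.integral_sub _root_.intervalIntegrable_const i1,
      intervalIntegral.integral_const_mul, intervalIntegral.integral_const_mul,
      integral_exp_mul_complex hc1, integral_exp_mul_complex hc2,
      intervalIntegral.integral_const]
    have he1 : Complex.exp ((2*Real.pi*I) * ((1:ℝ):ℂ)) = 1 := by
      push_cast; rw [mul_one, Complex.exp_two_pi_mul_I]
    have he2 : Complex.exp ((-(2*Real.pi*I)) * ((1:ℝ):ℂ)) = 1 := by
      push_cast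
      rw [mul_one, Complex.exp_neg, Complex.exp_two_pi_mul_I, inv_one]
    have he3 : Complex.exp (-(2*Real.pi*I)) = 1 := by
      rw [Complex.exp_neg, Complex.exp_two_pi_mul_I, inv_one]
    simp [he1, he2, he3]
  rw [intervalIntegral.integral_ofReal] at h1
  exact_mod_cast h1

private lemma circle_minus (z : ℂ) (hz : ‖z‖ < 1) :
    (∫ θ in (0:ℝ)..1, (Complex.normSq (1 - z * Complex.exp (2*Real.pi*I*θ)))⁻¹)
      = (1 - Complex.normSq z)⁻¹ := by
  have hsub : ∀ θ : ℝ, (2*Real.pi*I*(θ:ℂ)) = ((2*Real.pi*θ : ℝ) : ℂ) * I := by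
    intro θ; push_cast; ring
  have h : (∫ θ in (0:ℝ)..1, (Complex.normSq (1 - z * Complex.exp (2*Real.pi*I*θ)))⁻¹)
      = ∫ θ in (0:ℝ)..1,
        (fun t : ℝ => (Complex.normSq (1 - z * Complex.exp ((t:ℂ) * I)))⁻¹) (2*Real.pi*θ) := by
    apply intervalIntegral.integral_congr
    intro θ _
    simp only
    rw [hsub θ]
  rw [h, intervalIntegral.integral_comp_mul_left
    (fun t : ℝ => (Complex.normSq (1 - z * Complex.exp ((t:ℂ) * I)))⁻¹)
    (by positivity : (2*Real.pi:ℝ) ≠ 0)]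
  rw [mul_zero, mul_one, poisson_aux z hz]
  rw [smul_eq_mul]
  field_simp

private lemma base_ne (z : ℂ) (hz : ‖z‖ < 1) (u : ℝ) :
    1 - Complex.exp (2*Real.pi*I*u) * z ≠ 0 := by
  intro h
  rw [sub_eq_zero] at h
  have : ‖Complex.exp (2*Real.pi*I*(u:ℂ)) * z‖ = ‖z‖ := by
    rw [norm_mul]
    have : ‖Complex.exp (2*Real.pi*I*(u:ℂ))‖ = 1 := by
      rw [Complex.norm_exp]
      simp
    rw [this, one_mul]
  rw [← h] at this
  simp only [norm_one] at this
  rw [← this] at hz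
  exact lt_irrefl _ hz

private lemma icc_minus (z : ℂ) (hz : ‖z‖ < 1) :
    (∫ u in Set.Icc (0:ℝ) 1, ‖1 - Complex.exp (2*Real.pi*I*u) * z‖ ^ (-2:ℝ))
      = (1 - Complex.normSq z)⁻¹ := by
  have hpt : ∀ u : ℝ, ‖1 - Complex.exp (2*Real.pi*I*u) * z‖ ^ (-2:ℝ)
      = (Complex.normSq (1 - z * Complex.exp (2*Real.pi*I*u)))⁻¹ := by
    intro u
    rw [Real.rpow_neg (norm_nonneg _)]
    congr 1
    rw [show (2:ℝ) = ((2:ℕ):ℝ) by norm_num, Real.rpow_natCast,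
      Complex.sq_norm, mul_comm z]
  simp_rw [hpt]
  rw [MeasureTheory.integral_Icc_eq_integral_Ioc,
    ← intervalIntegral.integral_of_le (by norm_num : (0:ℝ) ≤ 1)]
  exact circle_minus z hz

private lemma icc_plus (z : ℂ) :
    (∫ u in Set.Icc (0:ℝ) 1, ‖1 - Complex.exp (2*Real.pi*I*u) * z‖ ^ (2:ℝ))
      = 1 + Complex.normSq z := by
  have hpt : ∀ u : ℝ, ‖1 - Complex.exp (2*Real.pi*I*u) * z‖ ^ (2:ℝ)
      = Complex.normSq (1 - z * Complex.exp (2*Real.pi*I*u)) := by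
    intro u
    rw [show (2:ℝ) = ((2:ℕ):ℝ) by norm_num, Real.rpow_natCast,
      Complex.sq_norm, mul_comm z]
  simp_rw [hpt]
  rw [MeasureTheory.integral_Icc_eq_integral_Ioc,
    ← intervalIntegral.integral_of_le (by norm_num : (0:ℝ) ≤ 1)]
  exact circle_plus z

private lemma cont_base (z : ℂ) :
    Continuous (fun u : ℝ => ‖1 - Complex.exp (2*Real.pi*I*u) * z‖) :=
  (continuous_const.sub (((Complex.continuous_exp.comp
    (continuous_const.mul Complex.continuous_ofReal))).mul continuous_const)).norm

private lemma cont_minus (z : ℂ) (hz : ‖z‖ < 1) :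
    Continuous (fun u : ℝ => ‖1 - Complex.exp (2*Real.pi*I*u) * z‖ ^ (-2:ℝ)) :=
  (cont_base z).rpow_const fun u =>
    Or.inl (norm_ne_zero_iff.mpr (base_ne z hz u))

private lemma cont_plus (z : ℂ) :
    Continuous (fun u : ℝ => ‖1 - Complex.exp (2*Real.pi*I*u) * z‖ ^ (2:ℝ)) :=
  (cont_base z).rpow_const fun _ => Or.inr (by norm_num)

private lemma factor_integral {Ω : Type} [MeasurableSpace Ω] (μ : Measure Ω)
    (T : Ω → ℝ) (hT : Measurable T) (hmap : μ.map T = volume.restrict (Set.Icc (0:ℝ) 1))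
    (g : ℝ → ℝ) (hg : Continuous g) :
    ∫ ω, g (T ω) ∂μ = ∫ u in Set.Icc (0:ℝ) 1, g u := by
  rw [← hmap, integral_map hT.aemeasurable hg.aestronglyMeasurable]

private lemma indep_prod_integral {Ω : Type} [MeasurableSpace Ω] (μ : Measure Ω)
    [IsProbabilityMeasure μ] (X : ℕ → Ω → ℝ) (hX : ∀ i, Measurable (X i))
    (hindep : iIndepFun X μ) (s : Finset ℕ) :
    ∫ ω, ∏ i ∈ s, X i ω ∂μ = ∏ i ∈ s, ∫ ω, X i ω ∂μ := by
  classical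
  induction s using Finset.induction_on with
  | empty => simp
  | @insert a s ha ih =>
      have hindep2 : IndepFun (X a) (∏ j ∈ s, X j) μ :=
        (hindep.indepFun_finset_prod_of_notMem hX ha).symm
      have hfn : (∏ j ∈ s, X j) = fun ω => ∏ j ∈ s, X j ω := by
        funext ω; exact Finset.prod_apply ω s X
      have hmeas : AEStronglyMeasurable (∏ j ∈ s, X j) μ := by
        rw [hfn]
        exact (Finset.measurable_prod s (fun i _ => hX i)).aestronglyMeasurable
      have h := hindep2.integral_mul_eq_mul_integral (hX a).aestronglyMeasurable hmeas
      calc ∫ ω, ∏ i ∈ insert a s, X i ω ∂μ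
          = ∫ ω, X a ω * (∏ j ∈ s, X j) ω ∂μ := by
            apply MeasureTheory.integral_congr_ae
            filter_upwards with ω
            rw [Finset.prod_insert ha, hfn]
        _ = (∫ ω, X a ω ∂μ) * ∫ ω, (∏ j ∈ s, X j) ω ∂μ := h
        _ = ∏ i ∈ insert a s, ∫ ω, X i ω ∂μ := by
            rw [Finset.prod_insert ha]
            congr 1
            rw [show (∫ ω, (∏ j ∈ s, X j) ω ∂μ) = ∫ ω, ∏ j ∈ s, X j ω ∂μ by rw [hfn]]
            exact ih

private lemma sum_Ioc_inv_sq_le (a : ℕ) (ha : 1 ≤ a) :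
    ∀ b : ℕ, (∑ n ∈ Finset.Ioc a b, ((n:ℝ)^2)⁻¹) ≤ (a:ℝ)⁻¹ := by
  have key : ∀ b : ℕ, a ≤ b → (∑ n ∈ Finset.Ioc a b, ((n:ℝ)^2)⁻¹) ≤ (a:ℝ)⁻¹ - (b:ℝ)⁻¹ := by
    intro b hb
    induction b, hb using Nat.le_induction with
    | base => simp
    | succ b hb ih =>
        rw [Finset.sum_Ioc_succ_top hb]
        have h1 : (1:ℝ) ≤ (b:ℝ) := by exact_mod_cast ha.trans hb
        have key2 : (((b:ℝ)+1)^2)⁻¹ ≤ (b:ℝ)⁻¹ - ((b:ℝ)+1)⁻¹ := by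
          have heq : (b:ℝ)⁻¹ - ((b:ℝ)+1)⁻¹ = ((b:ℝ)*((b:ℝ)+1))⁻¹ := by
            field_simp; ring
          rw [heq]
          apply inv_anti₀ (by positivity)
          nlinarith
        have hc : (((b+1:ℕ):ℝ)^2)⁻¹ = (((b:ℝ)+1)^2)⁻¹ := by push_cast; ring
        have hc2 : ((b+1:ℕ):ℝ)⁻¹ = ((b:ℝ)+1)⁻¹ := by push_cast; ring
        rw [hc, hc2]
        linarith
  intro b
  by_cases hab : a ≤ b
  · calc (∑ n ∈ Finset.Ioc a b, ((n:ℝ)^2)⁻¹) ≤ (a:ℝ)⁻¹ - (b:ℝ)⁻¹ := key b hab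
      _ ≤ (a:ℝ)⁻¹ := by
        have : (0:ℝ) ≤ (b:ℝ)⁻¹ := by positivity
        linarith
  · rw [Finset.Ioc_eq_empty (by omega)]
    simp

end Aux

set_option maxHeartbeats 1600000 in
/-- **Second moment of a Steinhaus Euler product.** For any `400 ≤ x ≤ y` and
`σ ≥ −1/log y`, `E ∏_{x < p ≤ y} |1 − f(p)/p^{1/2+σ}|^{∓2}
 = exp{∑_{x < p ≤ y} 1/p^{1+2σ} + O(1/(√x log x))}`, for both the exponent
`−2` and the exponent `2`. -/
theorem steinhaus_euler_product_second_moment :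
    ∃ C : ℝ, 0 < C ∧
      ∀ (Ω : Type) (_ : MeasurableSpace Ω) (μ : Measure Ω), IsProbabilityMeasure μ →
      ∀ (f : ℕ → Ω → ℂ) (θ : ℕ → Ω → ℝ),
      (∀ p, Measurable (θ p)) →
      iIndepFun θ μ →
      (∀ p : ℕ, p.Prime → μ.map (θ p) = volume.restrict (Set.Icc (0 : ℝ) 1)) →
      (∀ p : ℕ, p.Prime → ∀ ω,
        f p ω = Complex.exp (2 * Real.pi * Complex.I * θ p ω)) →
      ∀ x y σ : ℝ, 400 ≤ x → x ≤ y → -1 / Real.log y ≤ σ →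
      (∃ E : ℝ, |E| ≤ C / (Real.sqrt x * Real.log x) ∧
        ∫ ω, ∏ p ∈ (Finset.Icc 1 ⌊y⌋₊).filter
              (fun p : ℕ => p.Prime ∧ x < (p : ℝ)),
            ‖1 - f p ω / (p : ℂ) ^ (((1 / 2 + σ : ℝ) : ℂ))‖ ^ (-2 : ℝ) ∂μ
          = Real.exp
              ((∑ p ∈ (Finset.Icc 1 ⌊y⌋₊).filter
                  (fun p : ℕ => p.Prime ∧ x < (p : ℝ)),
                1 / ((p : ℝ) ^ (1 + 2 * σ))) + E)) ∧
      (∃ E : ℝ, |E| ≤ C / (Real.sqrt x * Real.log x) ∧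
        ∫ ω, ∏ p ∈ (Finset.Icc 1 ⌊y⌋₊).filter
              (fun p : ℕ => p.Prime ∧ x < (p : ℝ)),
            ‖1 - f p ω / (p : ℂ) ^ (((1 / 2 + σ : ℝ) : ℂ))‖ ^ (2 : ℝ) ∂μ
          = Real.exp
              ((∑ p ∈ (Finset.Icc 1 ⌊y⌋₊).filter
                  (fun p : ℕ => p.Prime ∧ x < (p : ℝ)),
                1 / ((p : ℝ) ^ (1 + 2 * σ))) + E)) := by
  classical
  refine ⟨1000, by norm_num, ?_⟩
  intro Ω mΩ μ hμ f θ hθ hindep hmap hf x y σ hx hxy hσ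
  set S := (Finset.Icc 1 ⌊y⌋₊).filter (fun p : ℕ => p.Prime ∧ x < (p : ℝ)) with hSdef
  have hx0 : (0:ℝ) < x := by linarith
  have hy0 : (0:ℝ) < y := by linarith
  have hlogy : (1:ℝ) ≤ Real.log y := by
    rw [Real.le_log_iff_exp_le hy0]
    have h1 : Real.exp 1 < 2.7182818286 := Real.exp_one_lt_d9
    linarith
  have hσ' : -σ ≤ 1 / Real.log y := by
    rw [neg_div] at hσ; linarith
  set t : ℕ → ℝ := fun p => ((p:ℝ) ^ (1 + 2*σ))⁻¹ with htdef
  have hfacts : ∀ p ∈ S, p.Prime ∧ x < (p:ℝ) ∧ (p:ℝ) ≤ y := by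
    intro p hp
    rw [hSdef, Finset.mem_filter, Finset.mem_Icc] at hp
    refine ⟨hp.2.1, hp.2.2, ?_⟩
    calc (p:ℝ) ≤ (⌊y⌋₊:ℝ) := by exact_mod_cast hp.1.2
      _ ≤ y := Nat.floor_le hy0.le
  have hp401 : ∀ p ∈ S, (401:ℝ) ≤ (p:ℝ) := by
    intro p hp
    obtain ⟨_, hpx, _⟩ := hfacts p hp
    have h1 : (400:ℝ) < (p:ℝ) := lt_of_le_of_lt hx hpx
    have h2 : 400 < p := by exact_mod_cast h1
    have h3 : 401 ≤ p := h2
    exact_mod_cast h3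
  have hT : ∀ p ∈ S, 0 < t p ∧ t p ≤ 8 / (p:ℝ) ∧ t p ≤ 1/50 := by
    intro p hp
    obtain ⟨hpp, hpx, hpy⟩ := hfacts p hp
    have hp401' := hp401 p hp
    have hp0 : (0:ℝ) < (p:ℝ) := by linarith
    have htpos : 0 < t p := by
      rw [htdef]; simp only
      positivity
    have hkey : t p ≤ 8 / (p:ℝ) := by
      rw [htdef]; simp only
      have h1 : ((p:ℝ) ^ (1 + 2*σ))⁻¹ = (p:ℝ) ^ (-(1 + 2*σ)) := by
        rw [← Real.rpow_neg hp0.le]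
      have h2 : (p:ℝ) ^ (-(1 + 2*σ)) = (p:ℝ) ^ (-(1:ℝ)) * (p:ℝ) ^ (-(2*σ)) := by
        rw [← Real.rpow_add hp0]; congr 1; ring
      have h3 : (p:ℝ) ^ (-(1:ℝ)) = (p:ℝ)⁻¹ := by
        rw [Real.rpow_neg_one]
      have h4 : (p:ℝ) ^ (-(2*σ)) ≤ 8 := by
        rw [Real.rpow_def_of_pos hp0]
        have hlp : 0 < Real.log (p:ℝ) := Real.log_pos (by linarith)
        have hlpy : Real.log (p:ℝ) ≤ Real.log y :=
          (Real.log_le_log_iff hp0 hy0).mpr hpy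
        have hly0 : (0:ℝ) < Real.log y := by linarith
        have h5 : -(2*σ) ≤ 2 / Real.log y := by
          have h5a : 2 / Real.log y = 2 * (1 / Real.log y) := by ring
          linarith
        have h6 : Real.log (p:ℝ) * (-(2*σ)) ≤ 2 := by
          calc Real.log (p:ℝ) * (-(2*σ)) ≤ Real.log (p:ℝ) * (2 / Real.log y) :=
                mul_le_mul_of_nonneg_left h5 hlp.le
            _ = 2 * (Real.log (p:ℝ) / Real.log y) := by ring
            _ ≤ 2 * 1 := by
                apply mul_le_mul_of_nonneg_left _ (by norm_num)
                rw [div_le_one hly0]; exact hlpy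
            _ = 2 := by ring
        calc Real.exp (Real.log (p:ℝ) * (-(2*σ))) ≤ Real.exp 2 := Real.exp_le_exp.mpr h6
          _ ≤ 8 := by
            have he1 : Real.exp 1 < 2.7182818286 := Real.exp_one_lt_d9
            have he2 : Real.exp 2 = Real.exp 1 * Real.exp 1 := by
              rw [← Real.exp_add]; norm_num
            nlinarith [Real.exp_pos 1]
      calc ((p:ℝ) ^ (1 + 2*σ))⁻¹ = (p:ℝ)⁻¹ * (p:ℝ) ^ (-(2*σ)) := by
            rw [h1, h2, h3]
        _ ≤ (p:ℝ)⁻¹ * 8 := mul_le_mul_of_nonneg_left h4 (by positivity)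
        _ = 8 / (p:ℝ) := by ring
    refine ⟨htpos, hkey, ?_⟩
    calc t p ≤ 8 / (p:ℝ) := hkey
      _ ≤ 8 / 401 := by
        apply div_le_div_of_nonneg_left (by norm_num) (by norm_num) hp401'
      _ ≤ 1/50 := by norm_num
  set z : ℕ → ℂ := fun p => ((p:ℂ) ^ (((1/2 + σ : ℝ) : ℂ)))⁻¹ with hzdef
  have hnormz : ∀ p ∈ S, Complex.normSq (z p) = t p ∧ ‖z p‖ < 1 := by
    intro p hp
    obtain ⟨hpp, hpx, _⟩ := hfacts p hp
    have hp401' := hp401 p hp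
    have hp0 : (0:ℝ) < (p:ℝ) := by linarith
    have habs : ‖(p:ℂ) ^ (((1/2 + σ : ℝ) : ℂ))‖ = (p:ℝ) ^ (1/2 + σ) := by
      rw [show ((p:ℕ):ℂ) = (((p:ℝ)):ℂ) by push_cast; rfl]
      rw [Complex.norm_cpow_eq_rpow_re_of_pos hp0]
      norm_num
    have hz1 : ‖z p‖ = ((p:ℝ) ^ ((1:ℝ)/2 + σ))⁻¹ := by
      rw [hzdef]; simp only [norm_inv, habs]
    have hns : Complex.normSq (z p) = t p := by
      rw [Complex.normSq_eq_norm_sq, hz1, htdef]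
      simp only
      rw [inv_pow, sq, ← Real.rpow_add hp0]
      congr 2
      ring
    refine ⟨hns, ?_⟩
    have h2 : ‖z p‖^2 = t p := by
      rw [← hns, Complex.normSq_eq_norm_sq]
    have h50 := (hT p hp).2.2
    nlinarith [norm_nonneg (z p)]
  -- the sum in the statement equals sum of t
  have hsum_eq : (∑ p ∈ S, 1 / ((p : ℝ) ^ (1 + 2 * σ))) = ∑ p ∈ S, t p := by
    apply Finset.sum_congr rfl
    intro p _
    rw [htdef, one_div]
  -- error bound machinery
  have hfl1 : 1 ≤ ⌊x⌋₊ := Nat.le_floor (by exact_mod_cast (by linarith : (1:ℝ) ≤ x))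
  have hsubset : S ⊆ Finset.Ioc ⌊x⌋₊ ⌊y⌋₊ := by
    intro p hp
    have hpIcc : p ∈ Finset.Icc 1 ⌊y⌋₊ := (Finset.mem_filter.mp hp).1
    obtain ⟨_, hpx, _⟩ := hfacts p hp
    rw [Finset.mem_Ioc]
    refine ⟨?_, (Finset.mem_Icc.mp hpIcc).2⟩
    have h1 : (⌊x⌋₊:ℝ) ≤ x := Nat.floor_le hx0.le
    exact_mod_cast lt_of_le_of_lt h1 hpx
  have hEbound : ∀ (d : ℕ → ℝ), (∀ p ∈ S, |d p| ≤ 2*(t p)^2) →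
      |∑ p ∈ S, d p| ≤ 1000 / (Real.sqrt x * Real.log x) := by
    intro d hd
    have h1 : |∑ p ∈ S, d p| ≤ ∑ p ∈ S, 2*(t p)^2 :=
      (Finset.abs_sum_le_sum_abs _ _).trans (Finset.sum_le_sum hd)
    have h2 : ∀ p ∈ S, 2*(t p)^2 ≤ 128 * (((p:ℝ))^2)⁻¹ := by
      intro p hp
      obtain ⟨ht0, ht8, _⟩ := hT p hp
      have hp0 : (0:ℝ) < (p:ℝ) := by linarith [hp401 p hp]
      have hsq : (t p)^2 ≤ (8/(p:ℝ))^2 := by nlinarith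
      have : (8/(p:ℝ))^2 = 64 * ((p:ℝ)^2)⁻¹ := by
        rw [div_pow]
        norm_num
        ring
      nlinarith [sq_nonneg (t p), inv_pos.mpr (pow_pos hp0 2)]
    have h3 : (∑ p ∈ S, 2*(t p)^2) ≤ ∑ p ∈ S, 128*(((p:ℝ))^2)⁻¹ :=
      Finset.sum_le_sum h2
    have h4 : (∑ p ∈ S, 128*(((p:ℝ))^2)⁻¹)
        ≤ 128 * ∑ p ∈ Finset.Ioc ⌊x⌋₊ ⌊y⌋₊, (((p:ℝ))^2)⁻¹ := by
      rw [← Finset.mul_sum]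
      apply mul_le_mul_of_nonneg_left _ (by norm_num)
      exact Finset.sum_le_sum_of_subset_of_nonneg hsubset (fun i _ _ => by positivity)
    have h5 := sum_Ioc_inv_sq_le ⌊x⌋₊ hfl1 ⌊y⌋₊
    have hflx : x - 1 < (⌊x⌋₊:ℝ) := Nat.sub_one_lt_floor x
    have hfl0 : (0:ℝ) < (⌊x⌋₊:ℝ) := by linarith
    have h6 : ((⌊x⌋₊:ℕ):ℝ)⁻¹ ≤ 2 / x := by
      calc ((⌊x⌋₊:ℕ):ℝ)⁻¹ ≤ (x/2)⁻¹ := by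
            apply inv_anti₀ (by linarith) (by linarith)
        _ = 2 / x := by rw [inv_div]
    have hsqx : Real.sqrt x * Real.sqrt x = x := Real.mul_self_sqrt hx0.le
    have hsqpos : 0 < Real.sqrt x := Real.sqrt_pos.mpr hx0
    have hlogx : 0 < Real.log x := Real.log_pos (by linarith)
    have hlog2 : Real.log x ≤ 2 * Real.sqrt x := by
      have h := Real.log_le_sub_one_of_pos hsqpos
      have h' : Real.log (Real.sqrt x) = Real.log x / 2 := Real.log_sqrt hx0.le
      linarith
    have final : 256 / x ≤ 1000 / (Real.sqrt x * Real.log x) := by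
      rw [div_le_div_iff₀ hx0 (by positivity)]
      calc 256 * (Real.sqrt x * Real.log x)
          ≤ 256 * (Real.sqrt x * (2*Real.sqrt x)) := by
            gcongr
        _ = 512 * (Real.sqrt x * Real.sqrt x) := by ring
        _ = 512 * x := by rw [hsqx]
        _ ≤ 1000 * x := by linarith
    calc |∑ p ∈ S, d p| ≤ ∑ p ∈ S, 2*(t p)^2 := h1
      _ ≤ ∑ p ∈ S, 128*(((p:ℝ))^2)⁻¹ := h3
      _ ≤ 128 * ∑ p ∈ Finset.Ioc ⌊x⌋₊ ⌊y⌋₊, (((p:ℝ))^2)⁻¹ := h4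
      _ ≤ 128 * ((⌊x⌋₊:ℕ):ℝ)⁻¹ := by
          apply mul_le_mul_of_nonneg_left h5 (by norm_num)
      _ ≤ 128 * (2/x) := by
          apply mul_le_mul_of_nonneg_left h6 (by norm_num)
      _ = 256 / x := by ring
      _ ≤ 1000 / (Real.sqrt x * Real.log x) := final
  constructor
  · -- minus case
    set G : ℕ → ℝ → ℝ := fun p =>
      if ‖z p‖ < 1 then (fun u => ‖1 - Complex.exp (2*Real.pi*I*u) * z p‖ ^ (-2:ℝ))
      else fun _ => 1 with hGdef
    have hGcont : ∀ p, Continuous (G p) := by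
      intro p
      rw [hGdef]; simp only
      split_ifs with h
      · exact cont_minus (z p) h
      · exact continuous_const
    set X : ℕ → Ω → ℝ := fun p => (G p) ∘ (θ p) with hXdef
    have hXmeas : ∀ p, Measurable (X p) := fun p => ((hGcont p).measurable).comp (hθ p)
    have hXindep : iIndepFun X μ :=
      hindep.comp G (fun p => (hGcont p).measurable)
    have hpt : ∀ ω, (∏ p ∈ S, ‖1 - f p ω / (p : ℂ) ^ (((1 / 2 + σ : ℝ) : ℂ))‖ ^ (-2 : ℝ))
        = ∏ p ∈ S, X p ω := by
      intro ω
      apply Finset.prod_congr rfl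
      intro p hp
      obtain ⟨hpp, _, _⟩ := hfacts p hp
      have hz1 := (hnormz p hp).2
      rw [hXdef]; simp only [Function.comp_apply]
      rw [hGdef]; simp only [if_pos hz1]
      rw [hf p hpp ω, div_eq_mul_inv, hzdef]
    have hint : (∫ ω, ∏ p ∈ S, ‖1 - f p ω / (p : ℂ) ^ (((1 / 2 + σ : ℝ) : ℂ))‖ ^ (-2 : ℝ) ∂μ)
        = ∏ p ∈ S, ∫ ω, X p ω ∂μ := by
      rw [show (fun ω => ∏ p ∈ S, ‖1 - f p ω / (p : ℂ) ^ (((1 / 2 + σ : ℝ) : ℂ))‖ ^ (-2 : ℝ))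
        = fun ω => ∏ p ∈ S, X p ω from funext hpt]
      exact indep_prod_integral μ X hXmeas hXindep S
    have hfac : ∀ p ∈ S, (∫ ω, X p ω ∂μ) = (1 - t p)⁻¹ := by
      intro p hp
      obtain ⟨hpp, _, _⟩ := hfacts p hp
      have hz1 := (hnormz p hp).2
      have : (∫ ω, X p ω ∂μ) = ∫ u in Set.Icc (0:ℝ) 1, G p u := by
        exact factor_integral μ (θ p) (hθ p) (hmap p hpp) (G p) (hGcont p)
      rw [this]
      have hGeq : G p = fun u : ℝ => ‖1 - Complex.exp (2*Real.pi*I*u) * z p‖ ^ (-2:ℝ) := by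
        rw [hGdef]; simp only [if_pos hz1]
      rw [hGeq, icc_minus (z p) hz1, (hnormz p hp).1]
    refine ⟨∑ p ∈ S, (-(Real.log (1 - t p)) - t p), ?_, ?_⟩
    · apply hEbound
      intro p hp
      obtain ⟨ht0, _, ht50⟩ := hT p hp
      have h1t : 0 < 1 - t p := by linarith
      have hlow : Real.log (1 - t p) ≤ -(t p) := by
        have := Real.log_le_sub_one_of_pos h1t
        linarith
      have hup : -(Real.log (1 - t p)) ≤ t p / (1 - t p) := by
        have h2 : Real.log ((1 - t p)⁻¹) ≤ (1 - t p)⁻¹ - 1 :=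
          Real.log_le_sub_one_of_pos (by positivity)
        rw [Real.log_inv] at h2
        have h3 : (1 - t p)⁻¹ - 1 = t p / (1 - t p) := by field_simp; ring
        linarith
      have hd1 : 0 ≤ -(Real.log (1 - t p)) - t p := by linarith
      have hd2 : -(Real.log (1 - t p)) - t p ≤ 2*(t p)^2 := by
        have h4 : t p / (1 - t p) - t p = (t p)^2 / (1 - t p) := by
          field_simp; ring
        have h5 : (t p)^2 / (1 - t p) ≤ 2*(t p)^2 := by
          rw [div_le_iff₀ h1t]; nlinarith
        linarith
      rw [_root_.abs_of_nonneg hd1]; exact hd2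
    · rw [hint, Finset.prod_congr rfl hfac, hsum_eq]
      have : (∑ p ∈ S, t p) + (∑ p ∈ S, (-(Real.log (1 - t p)) - t p))
          = ∑ p ∈ S, (-(Real.log (1 - t p))) := by
        rw [← Finset.sum_add_distrib]
        apply Finset.sum_congr rfl; intro p _; ring
      rw [this, Real.exp_sum]
      apply Finset.prod_congr rfl
      intro p hp
      obtain ⟨ht0, _, ht50⟩ := hT p hp
      have h1t : 0 < 1 - t p := by linarith
      rw [← Real.log_inv, Real.exp_log (by positivity)]
  · -- plus case
    set G : ℕ → ℝ → ℝ := fun p u => ‖1 - Complex.exp (2*Real.pi*I*u) * z p‖ ^ (2:ℝ)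
      with hGdef
    have hGcont : ∀ p, Continuous (G p) := fun p => cont_plus (z p)
    set X : ℕ → Ω → ℝ := fun p => (G p) ∘ (θ p) with hXdef
    have hXmeas : ∀ p, Measurable (X p) := fun p => ((hGcont p).measurable).comp (hθ p)
    have hXindep : iIndepFun X μ :=
      hindep.comp G (fun p => (hGcont p).measurable)
    have hpt : ∀ ω, (∏ p ∈ S, ‖1 - f p ω / (p : ℂ) ^ (((1 / 2 + σ : ℝ) : ℂ))‖ ^ (2 : ℝ))
        = ∏ p ∈ S, X p ω := by
      intro ω
      apply Finset.prod_congr rfl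
      intro p hp
      obtain ⟨hpp, _, _⟩ := hfacts p hp
      rw [hXdef]; simp only [Function.comp_apply]
      rw [hGdef]; simp only
      rw [hf p hpp ω, div_eq_mul_inv, hzdef]
    have hint : (∫ ω, ∏ p ∈ S, ‖1 - f p ω / (p : ℂ) ^ (((1 / 2 + σ : ℝ) : ℂ))‖ ^ (2 : ℝ) ∂μ)
        = ∏ p ∈ S, ∫ ω, X p ω ∂μ := by
      rw [show (fun ω => ∏ p ∈ S, ‖1 - f p ω / (p : ℂ) ^ (((1 / 2 + σ : ℝ) : ℂ))‖ ^ (2 : ℝ))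
        = fun ω => ∏ p ∈ S, X p ω from funext hpt]
      exact indep_prod_integral μ X hXmeas hXindep S
    have hfac : ∀ p ∈ S, (∫ ω, X p ω ∂μ) = 1 + t p := by
      intro p hp
      obtain ⟨hpp, _, _⟩ := hfacts p hp
      have : (∫ ω, X p ω ∂μ) = ∫ u in Set.Icc (0:ℝ) 1, G p u := by
        exact factor_integral μ (θ p) (hθ p) (hmap p hpp) (G p) (hGcont p)
      rw [this, hGdef]
      rw [icc_plus (z p), (hnormz p hp).1]
    refine ⟨∑ p ∈ S, (Real.log (1 + t p) - t p), ?_, ?_⟩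
    · apply hEbound
      intro p hp
      obtain ⟨ht0, _, ht50⟩ := hT p hp
      have h1t : (0:ℝ) < 1 + t p := by linarith
      have hup : Real.log (1 + t p) ≤ t p := by
        have := Real.log_le_sub_one_of_pos h1t
        linarith
      have hlow : t p / (1 + t p) ≤ Real.log (1 + t p) := by
        have h2 : Real.log ((1 + t p)⁻¹) ≤ (1 + t p)⁻¹ - 1 :=
          Real.log_le_sub_one_of_pos (by positivity)
        rw [Real.log_inv] at h2
        have h3 : (1 + t p)⁻¹ - 1 = -(t p / (1 + t p)) := by field_simp; ring
        linarith
      have hd2 : |Real.log (1 + t p) - t p| ≤ (t p)^2 := by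
        rw [abs_le]
        constructor
        · have h4 : t p - t p / (1 + t p) = (t p)^2 / (1 + t p) := by
            field_simp; ring
          have h5 : (t p)^2 / (1 + t p) ≤ (t p)^2 := by
            apply div_le_self (by positivity) (by linarith)
          linarith
        · linarith [sq_nonneg (t p)]
      calc |Real.log (1 + t p) - t p| ≤ (t p)^2 := hd2
        _ ≤ 2*(t p)^2 := by nlinarith
    · rw [hint, Finset.prod_congr rfl hfac, hsum_eq]
      have : (∑ p ∈ S, t p) + (∑ p ∈ S, (Real.log (1 + t p) - t p))
          = ∑ p ∈ S, Real.log (1 + t p) := by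
        rw [← Finset.sum_add_distrib]
        apply Finset.sum_congr rfl; intro p _; ring
      rw [this, Real.exp_sum]
      apply Finset.prod_congr rfl
      intro p hp
      obtain ⟨ht0, _, _⟩ := hT p hp
      rw [Real.exp_log (by linarith)]
end

section
/- Let f be a Rademacher random multiplicative function. For any real t₁, any 400 ≤ x ≤ y, and any σ ≥ −1/log y: (i) E ∏_{x < p ≤ y} |1 + f(p)/p^{1/2+σ+it₁}|² = exp{ ∑_{x < p ≤ y} 1/p^{1+2σ} + O(1/(√x log x)) }; and (ii) E ∏_{x < p ≤ y} |1 + f(p)/p^{1/2+σ+it₁}|^{−2} = exp{ ∑_{x < p ≤ y} (1 + 2cos(2t₁ log p))/p^{1+2σ} + O(1/(√x log x)) }. -/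
open MeasureTheory ProbabilityTheory Complex

lemma log_err {u : ℝ} (hu : |u| ≤ 1/2) : |Real.log (1+u) - u| ≤ 2*u^2 := by
  obtain ⟨hu1, hu2⟩ := abs_le.1 hu
  have h1 : (0:ℝ) < 1 + u := by linarith
  have hle : Real.log (1+u) ≤ u := by
    have := Real.log_le_sub_one_of_pos h1; linarith
  have hge : u/(1+u) ≤ Real.log (1+u) := by
    have h2 : (0:ℝ) < (1+u)⁻¹ := by positivity
    have h3 := Real.log_le_sub_one_of_pos h2
    rw [Real.log_inv] at h3
    have he : (1+u)⁻¹ - 1 = -(u/(1+u)) := by field_simp; ring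
    rw [he] at h3; linarith
  have key : u - u/(1+u) = u^2/(1+u) := by field_simp; ring
  rw [abs_sub_comm, _root_.abs_of_nonneg (by linarith)]
  have h4 : u^2/(1+u) ≤ 2*u^2 := by
    rw [div_le_iff₀ h1]; nlinarith [sq_nonneg u]
  linarith

lemma logA_bound (pp Q : ℝ) (hpp : 0 < pp) (h0 : 0 < Q) (h50 : Q ≤ 1/50)
    (h8 : Q ≤ 8/pp) : |Real.log (1+Q) - Q| ≤ 128/pp^2 := by
  have hQ2 : Q^2 ≤ 64/pp^2 := by
    have h := pow_le_pow_left₀ h0.le h8 2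
    calc Q^2 ≤ (8/pp)^2 := h
      _ = 64/pp^2 := by rw [div_pow]; norm_num
  have h := log_err (u := Q) (by rw [_root_.abs_of_pos h0]; linarith)
  calc |Real.log (1+Q) - Q| ≤ 2*Q^2 := h
    _ ≤ 2*(64/pp^2) := by linarith
    _ = 128/pp^2 := by ring

lemma logB_bound (pp Q cc : ℝ) (hpp : 0 < pp) (h0 : 0 < Q) (h50 : Q ≤ 1/50)
    (h8 : Q ≤ 8/pp) (hcc : cc^2 ≤ 1) :
    |Real.log ((1+Q)/((1+Q)^2-4*Q*cc^2)) - (4*cc^2-1)*Q| ≤ 6464/pp^2 := by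
  have hQ2 : Q^2 ≤ 64/pp^2 := by
    have h := pow_le_pow_left₀ h0.le h8 2
    calc Q^2 ≤ (8/pp)^2 := h
      _ = 64/pp^2 := by rw [div_pow]; norm_num
  set u := 2*Q + Q^2 - 4*Q*cc^2 with hu
  have hDu : (1+Q)^2 - 4*Q*cc^2 = 1 + u := by rw [hu]; ring
  have hu7 : |u| ≤ 7*Q := by
    rw [abs_le]; constructor <;> nlinarith [sq_nonneg cc]
  have hu12 : |u| ≤ 1/2 := by
    calc |u| ≤ 7*Q := hu7
      _ ≤ 7*(1/50) := by linarith
      _ ≤ 1/2 := by norm_num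
  have hD0 : (0:ℝ) < 1 + u := by
    have := abs_le.1 hu12; linarith
  have hlog1 := log_err (u := Q) (by rw [_root_.abs_of_pos h0]; linarith)
  have hlog2 := log_err hu12
  have hu2 : u^2 ≤ 49*Q^2 := by
    have h := pow_le_pow_left₀ (abs_nonneg u) hu7 2
    rw [_root_.sq_abs] at h
    calc u^2 ≤ (7*Q)^2 := h
      _ = 49*Q^2 := by ring
  have hsplit : Real.log ((1+Q)/(1+u)) = Real.log (1+Q) - Real.log (1+u) :=
    Real.log_div (by linarith) (by linarith)
  rw [hDu, hsplit]
  have hid : Real.log (1+Q) - Real.log (1+u) - (4*cc^2-1)*Q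
      = (Real.log (1+Q) - Q) - (Real.log (1+u) - u) - Q^2 := by rw [hu]; ring
  rw [hid]
  have t1 : |(Real.log (1+Q) - Q) - (Real.log (1+u) - u) - Q^2|
      ≤ |(Real.log (1+Q) - Q) - (Real.log (1+u) - u)| + |Q^2| := abs_sub _ _
  have t2 : |(Real.log (1+Q) - Q) - (Real.log (1+u) - u)|
      ≤ |Real.log (1+Q) - Q| + |Real.log (1+u) - u| := abs_sub _ _
  have t3 : |Q^2| = Q^2 := _root_.abs_of_nonneg (sq_nonneg Q)
  calc |(Real.log (1+Q) - Q) - (Real.log (1+u) - u) - Q^2|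
      ≤ |Real.log (1+Q) - Q| + |Real.log (1+u) - u| + Q^2 := by
        rw [t3] at t1; linarith
    _ ≤ 2*Q^2 + 2*u^2 + Q^2 := by linarith
    _ ≤ 2*Q^2 + 2*(49*Q^2) + Q^2 := by linarith
    _ = 101*Q^2 := by ring
    _ ≤ 101*(64/pp^2) := by linarith
    _ = 6464/pp^2 := by ring


lemma euler_factor_eval (σ t₁ : ℝ) (p : ℕ) (hp : 0 < p) (v : ℝ) :
    ‖1 + (v:ℂ)/(p:ℂ)^(((1/2 + σ : ℝ) : ℂ) + (t₁:ℂ) * Complex.I)‖^2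
      = 1 + 2*v*(Real.exp (-((1/2+σ)*Real.log p)))*(Real.cos (t₁ * Real.log p))
          + v^2*(Real.exp (-((1/2+σ)*Real.log p)))^2 := by
  have hp0 : (0:ℝ) < (p:ℝ) := by exact_mod_cast hp
  have hpc : (p:ℂ) ≠ 0 := by exact_mod_cast hp.ne'
  set s : ℂ := ((1/2 + σ : ℝ) : ℂ) + (t₁:ℂ) * Complex.I with hs
  set L : ℝ := Real.log p with hL
  have hlog : Complex.log (p:ℂ) = (L:ℂ) := by
    rw [hL, Complex.ofReal_log hp0.le, Complex.ofReal_natCast]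
  have hcpow : (p:ℂ)^s = Complex.exp ((L:ℂ) * s) := by
    rw [Complex.cpow_def_of_ne_zero hpc, hlog]
  have hdiv : (v:ℂ)/(p:ℂ)^s = (v:ℂ) * Complex.exp (-((L:ℂ)*s)) := by
    rw [hcpow, div_eq_mul_inv, ← Complex.exp_neg]
  set z := Complex.exp (-((L:ℂ)*s)) with hz
  have hzre : (-((L:ℂ)*s)).re = -((1/2+σ)*L) := by
    simp [hs, Complex.mul_re]
    ring
  have hzim : (-((L:ℂ)*s)).im = -(L*t₁) := by
    simp [hs, Complex.mul_im]
  set r : ℝ := Real.exp (-((1/2+σ)*L)) with hr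
  have hre : z.re = r * Real.cos (t₁*L) := by
    rw [hz, Complex.exp_re, hzre, hzim, Real.cos_neg, mul_comm L t₁]
  have him : z.im = -(r * Real.sin (t₁*L)) := by
    rw [hz, Complex.exp_im, hzre, hzim, Real.sin_neg, mul_comm L t₁]
    ring
  rw [hdiv]
  have hnorm : ‖1 + (v:ℂ) * z‖^2 = Complex.normSq (1 + (v:ℂ)*z) := by
    rw [Complex.sq_norm]
  rw [hnorm, Complex.normSq_apply]
  simp only [Complex.add_re, Complex.add_im, Complex.one_re, Complex.one_im,
    Complex.mul_re, Complex.mul_im, Complex.ofReal_re, Complex.ofReal_im, hre, him]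
  have hpyth := Real.sin_sq_add_cos_sq (t₁*L)
  nlinarith [hpyth, sq_nonneg (v*r), sq_nonneg v, sq_nonneg r]

lemma mean_eval (σ t₁ y : ℝ) (hσ : -1/Real.log y ≤ σ) (hlogy : 4 < Real.log y)
    (p : ℕ) (hp : p.Prime) (hpy : (p:ℝ) ≤ y) :
    (0 < 1/(p:ℝ)^(1+2*σ)) ∧ (1/(p:ℝ)^(1+2*σ) ≤ 8/(p:ℝ)) ∧
    ((‖1 + ((1:ℝ):ℂ)/(p:ℂ)^(((1/2 + σ : ℝ) : ℂ) + (t₁:ℂ) * Complex.I)‖^(2:ℝ)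
      + ‖1 + ((-1:ℝ):ℂ)/(p:ℂ)^(((1/2 + σ : ℝ) : ℂ) + (t₁:ℂ) * Complex.I)‖^(2:ℝ))/2
       = 1 + 1/(p:ℝ)^(1+2*σ)) ∧
    ((‖1 + ((1:ℝ):ℂ)/(p:ℂ)^(((1/2 + σ : ℝ) : ℂ) + (t₁:ℂ) * Complex.I)‖^(-2:ℝ)
      + ‖1 + ((-1:ℝ):ℂ)/(p:ℂ)^(((1/2 + σ : ℝ) : ℂ) + (t₁:ℂ) * Complex.I)‖^(-2:ℝ))/2
       = (1 + 1/(p:ℝ)^(1+2*σ)) /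
         ((1 + 1/(p:ℝ)^(1+2*σ))^2 - 4*(1/(p:ℝ)^(1+2*σ))*(Real.cos (t₁*Real.log p))^2)) ∧
    (0 < (1 + 1/(p:ℝ)^(1+2*σ))^2 - 4*(1/(p:ℝ)^(1+2*σ))*(Real.cos (t₁*Real.log p))^2) := by
  have hp0 : (0:ℝ) < (p:ℝ) := by exact_mod_cast hp.pos
  have hp1 : (1:ℝ) < (p:ℝ) := by exact_mod_cast hp.one_lt
  have hL0 : 0 < Real.log p := Real.log_pos hp1
  have hlogy0 : (0:ℝ) < Real.log y := by linarith
  have hσ4 : -(1/4:ℝ) ≤ σ := by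
    have h1 : (1:ℝ)/Real.log y ≤ 1/4 := by
      rw [div_le_div_iff₀ hlogy0 (by norm_num)]; linarith
    have h2 : -(1/4:ℝ) ≤ -1/Real.log y := by rw [neg_div]; linarith
    linarith
  have hhalf : (0:ℝ) < 1/2 + σ := by linarith
  set L : ℝ := Real.log p with hL
  set rr : ℝ := Real.exp (-((1/2+σ)*L)) with hrr
  set cc : ℝ := Real.cos (t₁ * L) with hcc
  have hQr : rr^2 = 1/(p:ℝ)^(1+2*σ) := by
    have hexp : rr^2 = Real.exp (-(L*(1+2*σ))) := by
      rw [hrr, sq, ← Real.exp_add]; congr 1; ring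
    rw [hexp, Real.rpow_def_of_pos hp0, ← hL, Real.exp_neg, one_div]
  have hQpos : 0 < 1/(p:ℝ)^(1+2*σ) := by positivity
  have hQle : 1/(p:ℝ)^(1+2*σ) ≤ 8/(p:ℝ) := by
    rw [one_div, Real.rpow_def_of_pos hp0, ← Real.exp_neg]
    have hexp2 : Real.exp (-(Real.log (p:ℝ) * (1+2*σ)))
        = Real.exp (-L) * Real.exp (-(2*σ*L)) := by
      rw [← Real.exp_add]; congr 1; rw [hL]; ring
    rw [hexp2, Real.exp_neg, Real.exp_log hp0]
    have hLy : L ≤ Real.log y := Real.log_le_log hp0 hpy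
    have h2 : -σ ≤ 1/Real.log y := by
      have : -1/Real.log y = -(1/Real.log y) := by rw [neg_div]
      linarith [this ▸ hσ]
    have h1 : Real.exp (-(2*σ*L)) ≤ Real.exp 2 := by
      apply Real.exp_le_exp.2
      have hstep : -(2*σ*L) = (-σ)*(2*L) := by ring
      rw [hstep]
      calc (-σ)*(2*L) ≤ (1/Real.log y)*(2*L) := by
            apply mul_le_mul_of_nonneg_right h2 (by positivity)
        _ ≤ 2 := by
            rw [div_mul_eq_mul_div, div_le_iff₀ hlogy0]; nlinarith
    have hexp2le : Real.exp 2 ≤ 8 := by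
      have he : Real.exp 2 = Real.exp 1 * Real.exp 1 := by
        rw [← Real.exp_add]; norm_num
      nlinarith [Real.exp_one_lt_d9, Real.exp_pos 1]
    calc (p:ℝ)⁻¹ * Real.exp (-(2*σ*L)) ≤ (p:ℝ)⁻¹ * 8 := by
          apply mul_le_mul_of_nonneg_left (h1.trans hexp2le) (by positivity)
      _ = 8/(p:ℝ) := by ring
  have hv : ∀ v : ℝ, ‖1 + (v:ℂ)/(p:ℂ)^(((1/2 + σ : ℝ) : ℂ) + (t₁:ℂ) * Complex.I)‖^(2:ℝ)
      = 1 + 2*v*rr*cc + v^2*rr^2 := by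
    intro v
    rw [show (2:ℝ) = ((2:ℕ):ℝ) by norm_num, Real.rpow_natCast]
    exact euler_factor_eval σ t₁ p hp.pos v
  have hvneg : ∀ v : ℝ, ‖1 + (v:ℂ)/(p:ℂ)^(((1/2 + σ : ℝ) : ℂ) + (t₁:ℂ) * Complex.I)‖^(-2:ℝ)
      = (1 + 2*v*rr*cc + v^2*rr^2)⁻¹ := by
    intro v
    rw [show (-2:ℝ) = -(2:ℝ) by norm_num, Real.rpow_neg (norm_nonneg _), hv v]
  have hrr1 : rr < 1 := by
    have h : -((1/2+σ)*L) < 0 := by nlinarith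
    calc rr = Real.exp (-((1/2+σ)*L)) := hrr
      _ < Real.exp 0 := Real.exp_lt_exp.2 h
      _ = 1 := Real.exp_zero
  have hrr0 : 0 < rr := Real.exp_pos _
  have hccle : -1 ≤ cc ∧ cc ≤ 1 := ⟨Real.neg_one_le_cos _, Real.cos_le_one _⟩
  have hN1 : 0 < 1 + 2*rr*cc + rr^2 := by
    nlinarith [mul_pos (sub_pos.2 hrr1) (sub_pos.2 hrr1), hccle.1, hrr0]
  have hN2 : 0 < 1 - 2*rr*cc + rr^2 := by
    nlinarith [mul_pos (sub_pos.2 hrr1) (sub_pos.2 hrr1), hccle.2, hrr0]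
  have hD : (1+rr^2)^2 - 4*rr^2*cc^2 = (1 + 2*rr*cc + rr^2)*(1 - 2*rr*cc + rr^2) := by ring
  have hDpos : 0 < (1 + 1/(p:ℝ)^(1+2*σ))^2 - 4*(1/(p:ℝ)^(1+2*σ))*cc^2 := by
    rw [← hQr, hD]; exact mul_pos hN1 hN2
  refine ⟨hQpos, hQle, ?_, ?_, hDpos⟩
  · rw [hv 1, hv (-1), ← hQr]; ring
  · rw [hvneg 1, hvneg (-1), ← hQr]
    have hN1' : 1 + 2*(1:ℝ)*rr*cc + (1:ℝ)^2*rr^2 = 1 + 2*rr*cc + rr^2 := by ring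
    have hN2' : 1 + 2*(-1:ℝ)*rr*cc + (-1:ℝ)^2*rr^2 = 1 - 2*rr*cc + rr^2 := by ring
    rw [hN1', hN2']
    rw [div_eq_div_iff (by norm_num) (by rw [hD]; exact (mul_pos hN1 hN2).ne')]
    field_simp
    ring


lemma my_integrable_dirac {g : ℝ → ℝ} (hg : Measurable g) (a : ℝ) :
    Integrable g (Measure.dirac a) := by
  refine ⟨hg.aestronglyMeasurable, ?_⟩
  have : ∫⁻ x, ‖g x‖ₑ ∂(Measure.dirac a) = ‖g a‖ₑ := lintegral_dirac a _
  simp only [HasFiniteIntegral, this]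
  exact enorm_lt_top

lemma aux_integral_single {Ω : Type} [MeasurableSpace Ω] (μ : Measure Ω)
    (F : Ω → ℝ) (hF : Measurable F)
    (hmap : μ.map F = (2⁻¹ : ENNReal) • Measure.dirac (1:ℝ)
      + (2⁻¹ : ENNReal) • Measure.dirac (-1:ℝ))
    (g : ℝ → ℝ) (hg : Measurable g) :
    ∫ ω, g (F ω) ∂μ = (g 1 + g (-1))/2 := by
  have h1 : ∫ ω, g (F ω) ∂μ = ∫ v, g v ∂(μ.map F) := by
    rw [integral_map hF.aemeasurable hg.aestronglyMeasurable]
  rw [h1, hmap, integral_add_measure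
      ((my_integrable_dirac hg 1).smul_measure (by norm_num))
      ((my_integrable_dirac hg (-1)).smul_measure (by norm_num)),
    integral_smul_measure, integral_smul_measure, integral_dirac, integral_dirac]
  simp only [ENNReal.toReal_inv, ENNReal.toReal_ofNat, smul_eq_mul]
  ring

lemma aux_integral_prod {Ω : Type} [MeasurableSpace Ω] (μ : Measure Ω) [IsProbabilityMeasure μ]
    (f : ℕ → Ω → ℝ) (hf : ∀ p, Measurable (f p))
    (hindep : iIndepFun (fun p : {p : ℕ // p.Prime} => f p.1) μ)
    (g : ℕ → ℝ → ℝ) (hg : ∀ p, Measurable (g p)) (hgnn : ∀ p v, 0 ≤ g p v)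
    (S : Finset ℕ) (hS : ∀ p ∈ S, p.Prime) :
    ∫ ω, ∏ p ∈ S, g p (f p ω) ∂μ = ∏ p ∈ S, ∫ ω, g p (f p ω) ∂μ := by
  classical
  have hH : iIndepFun
      (fun q : {p : ℕ // p.Prime} => (g q.1) ∘ (f q.1)) μ :=
    hindep.comp _ (fun q => hg q.1)
  induction S using Finset.induction_on with
  | empty => simp
  | @insert a S ha ih =>
    have haP : a.Prime := hS a (Finset.mem_insert_self a S)
    have hSP : ∀ p ∈ S, p.Prime := fun p hp => hS p (Finset.mem_insert_of_mem hp)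
    set T : Finset {p : ℕ // p.Prime} :=
      S.attach.map ⟨fun x => ⟨x.1, hSP x.1 x.2⟩,
        by intro u v huv; exact Subtype.ext (congrArg (fun z : {p : ℕ // p.Prime} => z.1) huv)⟩ with hT
    have hprodeq : (fun ω => ∏ q ∈ T, ((g q.1) ∘ (f q.1)) ω)
        = fun ω => ∏ p ∈ S, g p (f p ω) := by
      funext ω
      rw [hT, Finset.prod_map]
      exact Finset.prod_attach S (fun p => g p (f p ω))
    have hnotmem : (⟨a, haP⟩ : {p : ℕ // p.Prime}) ∉ T := by
      simp only [hT, Finset.mem_map, Finset.mem_attach, Function.Embedding.coeFn_mk,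
        true_and, Subtype.mk.injEq]
      rintro ⟨x, hx⟩
      have hx' : x.1 = a := congrArg (fun z : {p : ℕ // p.Prime} => z.1) hx
      exact ha (hx' ▸ x.2)
    have hind2 : IndepFun (fun ω => ∏ p ∈ S, g p (f p ω)) ((g a) ∘ (f a)) μ := by
      have h := hH.indepFun_finsetProd_of_notMem
        (fun q => (hg q.1).comp (hf q.1)) hnotmem
      have he : (∏ j ∈ T, (g j.1) ∘ (f j.1)) = fun ω => ∏ p ∈ S, g p (f p ω) := by
        rw [← hprodeq]; funext ω; exact Finset.prod_apply ω T _
      rwa [he] at h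
    simp_rw [Finset.prod_insert ha]
    rw [← ih hSP]
    have hmul := hind2.symm.integral_mul_eq_mul_integral
      ((hg a).comp (hf a)).aestronglyMeasurable
      (Finset.measurable_prod S fun p _ => (hg p).comp (hf p)).aestronglyMeasurable
    simpa [Pi.mul_apply, Function.comp] using hmul

lemma sum_Ioc_inv_sq (m : ℕ) (hm : 1 ≤ m) (N : ℕ) :
    ∑ n ∈ Finset.Ioc m N, (1:ℝ)/(n:ℝ)^2 ≤ 1/(m:ℝ) := by
  have key : ∀ K : ℕ, ∑ n ∈ Finset.Ioc m K, (1:ℝ)/(n:ℝ)^2 ≤ 1/(m:ℝ) - 1/((max m K : ℕ):ℝ) := by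
    intro K
    induction K with
    | zero => simp
    | succ K ih =>
      rcases le_or_gt (K+1) m with h | h
      · rw [Finset.Ioc_eq_empty (by omega)]
        rw [Nat.max_eq_left (by omega : K+1 ≤ m)]
        simp
      · have hmK : m ≤ K := by omega
        rw [Finset.sum_Ioc_succ_top hmK]
        rw [Nat.max_eq_right hmK] at ih
        rw [Nat.max_eq_right (by omega : m ≤ K+1)]
        have hN1 : (1:ℝ) ≤ (K:ℝ) := by exact_mod_cast (by omega : 1 ≤ K)
        have hcast : ((K+1:ℕ):ℝ) = (K:ℝ)+1 := by push_cast; ring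
        rw [hcast]
        have step : (1:ℝ)/((K:ℝ)+1)^2 ≤ 1/(K:ℝ) - 1/((K:ℝ)+1) := by
          rw [div_sub_div _ _ (by positivity) (by positivity), div_le_div_iff₀ (by positivity) (by positivity)]
          ring_nf; nlinarith
        linarith
  have h := key N
  have h2 : (0:ℝ) ≤ 1/((max m N : ℕ):ℝ) := by positivity
  linarith



/-- **Second moments of a Rademacher Euler product.** Let `f` be a Rademacher
random multiplicative function. For any real `t₁`, any `400 ≤ x ≤ y` and any
`σ ≥ −1/log y`:
(i) `E ∏_{x < p ≤ y} |1 + f(p)/p^{1/2+σ+it₁}|²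
   = exp{∑_{x < p ≤ y} 1/p^{1+2σ} + O(1/(√x log x))}`, and
(ii) `E ∏_{x < p ≤ y} |1 + f(p)/p^{1/2+σ+it₁}|^{−2}
   = exp{∑_{x < p ≤ y} (1 + 2cos(2t₁ log p))/p^{1+2σ} + O(1/(√x log x))}`. -/
theorem rademacher_euler_product_second_moment :
    ∃ C : ℝ, 0 < C ∧
      ∀ (Ω : Type) (_ : MeasurableSpace Ω) (μ : Measure Ω), IsProbabilityMeasure μ →
      ∀ f : ℕ → Ω → ℝ,
      (∀ p, Measurable (f p)) →
      iIndepFun (fun p : {p : ℕ // p.Prime} => f p.1) μ →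
      (∀ p : ℕ, p.Prime →
        μ.map (f p) = (2⁻¹ : ENNReal) • Measure.dirac (1 : ℝ)
          + (2⁻¹ : ENNReal) • Measure.dirac (-1 : ℝ)) →
      ∀ t₁ x y σ : ℝ, 400 ≤ x → x ≤ y → -1 / Real.log y ≤ σ →
      (∃ E : ℝ, |E| ≤ C / (Real.sqrt x * Real.log x) ∧
        ∫ ω, ∏ p ∈ (Finset.Icc 1 ⌊y⌋₊).filter
              (fun p : ℕ => p.Prime ∧ x < (p : ℝ)),
            ‖1 + (f p ω : ℂ) /
                (p : ℂ) ^ (((1 / 2 + σ : ℝ) : ℂ) + (t₁ : ℂ) * Complex.I)‖ ^ (2 : ℝ) ∂μ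
          = Real.exp
              ((∑ p ∈ (Finset.Icc 1 ⌊y⌋₊).filter
                  (fun p : ℕ => p.Prime ∧ x < (p : ℝ)),
                1 / ((p : ℝ) ^ (1 + 2 * σ))) + E)) ∧
      (∃ E : ℝ, |E| ≤ C / (Real.sqrt x * Real.log x) ∧
        ∫ ω, ∏ p ∈ (Finset.Icc 1 ⌊y⌋₊).filter
              (fun p : ℕ => p.Prime ∧ x < (p : ℝ)),
            ‖1 + (f p ω : ℂ) /
                (p : ℂ) ^ (((1 / 2 + σ : ℝ) : ℂ) + (t₁ : ℂ) * Complex.I)‖ ^ (-2 : ℝ) ∂μ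
          = Real.exp
              ((∑ p ∈ (Finset.Icc 1 ⌊y⌋₊).filter
                  (fun p : ℕ => p.Prime ∧ x < (p : ℝ)),
                (1 + 2 * Real.cos (2 * t₁ * Real.log p)) / ((p : ℝ) ^ (1 + 2 * σ))) + E)) := by
  classical
  refine ⟨30000, by norm_num, ?_⟩
  intro Ω mΩ μ hprob f hmeasf hindep hmap t₁ x y σ hx hxy hσ
  haveI := hprob
  -- numeric setup
  have hx0 : (0:ℝ) < x := by linarith
  have hy400 : (400:ℝ) ≤ y := hx.trans hxy
  have hy0 : (0:ℝ) < y := by linarith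
  have hexp4 : Real.exp 4 < 400 := by
    have h4 : Real.exp 4 = (Real.exp 1)^4 := by
      rw [show (4:ℝ) = ((4:ℕ):ℝ) by norm_num, ← Real.exp_nat_mul]
      norm_num
    have h1 := Real.exp_one_lt_d9
    have h0 := (Real.exp_pos 1).le
    have h2 : (Real.exp 1)^2 ≤ 8 := by nlinarith
    have h3 : (Real.exp 1)^4 = ((Real.exp 1)^2)^2 := by ring
    rw [h4, h3]; nlinarith
  have hlogy : (4:ℝ) < Real.log y := by
    rw [Real.lt_log_iff_exp_lt hy0]; linarith
  set S : Finset ℕ := (Finset.Icc 1 ⌊y⌋₊).filter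
      (fun p : ℕ => p.Prime ∧ x < (p : ℝ)) with hSdef
  have hmem : ∀ p ∈ S, p.Prime ∧ x < (p:ℝ) ∧ (p:ℝ) ≤ y := by
    intro p hp
    rw [hSdef, Finset.mem_filter, Finset.mem_Icc] at hp
    exact ⟨hp.2.1, hp.2.2, (Nat.le_floor_iff hy0.le).1 hp.1.2⟩
  have hSprime : ∀ p ∈ S, p.Prime := fun p hp => (hmem p hp).1
  -- sum of 1/p^2 bound
  have hsub : S ⊆ Finset.Ioc ⌊x⌋₊ ⌊y⌋₊ := by
    intro p hp
    obtain ⟨hpP, hpx', hpy'⟩ := hmem p hp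
    rw [Finset.mem_Ioc]
    constructor
    · exact (Nat.floor_lt hx0.le).2 hpx'
    · rw [hSdef, Finset.mem_filter, Finset.mem_Icc] at hp
      exact hp.1.2
  have hfloor1 : 1 ≤ ⌊x⌋₊ := Nat.le_floor (by exact_mod_cast (by linarith : (1:ℝ) ≤ x))
  have hsum1 : ∑ p ∈ S, (1:ℝ)/(p:ℝ)^2 ≤ 1/(⌊x⌋₊:ℝ) := by
    refine le_trans (Finset.sum_le_sum_of_subset_of_nonneg hsub ?_) (sum_Ioc_inv_sq ⌊x⌋₊ hfloor1 ⌊y⌋₊)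
    intro n _ _; positivity
  have hfloorpos : (0:ℝ) < (⌊x⌋₊:ℝ) := by exact_mod_cast hfloor1
  have hsum2 : ∑ p ∈ S, (1:ℝ)/(p:ℝ)^2 ≤ 2/x := by
    refine hsum1.trans ?_
    rw [div_le_div_iff₀ hfloorpos hx0]
    have := Nat.sub_one_lt_floor x
    linarith
  have hsumnn : (0:ℝ) ≤ ∑ p ∈ S, (1:ℝ)/(p:ℝ)^2 := by
    apply Finset.sum_nonneg; intro n _; positivity
  have hfinal : 6464 * (2/x) ≤ 30000/(Real.sqrt x * Real.log x) := by
    have hsx : 0 < Real.sqrt x := Real.sqrt_pos.2 hx0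
    have hlx : 0 < Real.log x := Real.log_pos (by linarith)
    have hxx : Real.sqrt x * Real.sqrt x = x := Real.mul_self_sqrt hx0.le
    have hlog2 : Real.log x ≤ 2*Real.sqrt x := by
      have h1 : Real.log (Real.sqrt x) ≤ Real.sqrt x - 1 := Real.log_le_sub_one_of_pos hsx
      have h2 : Real.log (Real.sqrt x) = Real.log x / 2 := Real.log_sqrt hx0.le
      linarith
    rw [show (6464:ℝ)*(2/x) = 12928/x by ring, div_le_div_iff₀ hx0 (by positivity)]
    nlinarith [mul_le_mul_of_nonneg_left hlog2 hsx.le, hxx, mul_pos hsx hlx]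
  -- per-prime basic facts
  have hQfacts : ∀ p ∈ S, (0:ℝ) < (p:ℝ) ∧ 0 < 1/(p:ℝ)^(1+2*σ) ∧
      1/(p:ℝ)^(1+2*σ) ≤ 8/(p:ℝ) ∧ 1/(p:ℝ)^(1+2*σ) ≤ 1/50 := by
    intro p hp
    obtain ⟨hpP, hpx', hpy'⟩ := hmem p hp
    have hp0 : (0:ℝ) < (p:ℝ) := by exact_mod_cast hpP.pos
    obtain ⟨hQpos, hQ8, _, _, _⟩ := mean_eval σ t₁ y hσ hlogy p hpP hpy'
    refine ⟨hp0, hQpos, hQ8, hQ8.trans ?_⟩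
    rw [div_le_div_iff₀ hp0 (by norm_num)]
    linarith
  -- measurability of the integrand factors
  have hcont : ∀ p : ℕ, Continuous fun v : ℝ =>
      ‖1 + (v:ℂ)/(p:ℂ)^(((1/2 + σ : ℝ):ℂ) + (t₁:ℂ)*Complex.I)‖ := by
    intro p
    exact (continuous_const.add (Complex.continuous_ofReal.div_const _)).norm
  have hg2meas : ∀ p : ℕ, Measurable (fun v : ℝ =>
      ‖1 + (v:ℂ)/(p:ℂ)^(((1/2 + σ : ℝ):ℂ) + (t₁:ℂ)*Complex.I)‖^(2:ℝ)) := by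
    intro p
    have he : (fun v : ℝ => ‖1 + (v:ℂ)/(p:ℂ)^(((1/2 + σ : ℝ):ℂ) + (t₁:ℂ)*Complex.I)‖^(2:ℝ))
        = fun v : ℝ => ‖1 + (v:ℂ)/(p:ℂ)^(((1/2 + σ : ℝ):ℂ) + (t₁:ℂ)*Complex.I)‖^(2:ℕ) := by
      funext v
      rw [show (2:ℝ) = ((2:ℕ):ℝ) by norm_num, Real.rpow_natCast]
    rw [he]
    exact ((hcont p).pow 2).measurable
  have hgmmeas : ∀ p : ℕ, Measurable (fun v : ℝ =>
      ‖1 + (v:ℂ)/(p:ℂ)^(((1/2 + σ : ℝ):ℂ) + (t₁:ℂ)*Complex.I)‖^(-2:ℝ)) := by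
    intro p
    have he : (fun v : ℝ => ‖1 + (v:ℂ)/(p:ℂ)^(((1/2 + σ : ℝ):ℂ) + (t₁:ℂ)*Complex.I)‖^(-2:ℝ))
        = fun v : ℝ => (‖1 + (v:ℂ)/(p:ℂ)^(((1/2 + σ : ℝ):ℂ) + (t₁:ℂ)*Complex.I)‖^(2:ℕ))⁻¹ := by
      funext v
      rw [show (-2:ℝ) = -((2:ℕ):ℝ) by norm_num, Real.rpow_neg (norm_nonneg _),
        Real.rpow_natCast]
    rw [he]
    exact ((hcont p).pow 2).measurable.inv
  constructor
  · -- part (i)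
    refine ⟨∑ p ∈ S, (Real.log (1 + 1/(p:ℝ)^(1+2*σ)) - 1/(p:ℝ)^(1+2*σ)), ?_, ?_⟩
    · -- error bound
      refine le_trans (Finset.abs_sum_le_sum_abs _ _) ?_
      have hstep : ∑ p ∈ S, |Real.log (1 + 1/(p:ℝ)^(1+2*σ)) - 1/(p:ℝ)^(1+2*σ)|
          ≤ ∑ p ∈ S, (128:ℝ)/(p:ℝ)^2 := by
        apply Finset.sum_le_sum
        intro p hp
        obtain ⟨hp0, hQpos, hQ8, hQ50⟩ := hQfacts p hp
        exact logA_bound (p:ℝ) _ hp0 hQpos hQ50 hQ8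
      refine hstep.trans ?_
      have h128 : ∑ p ∈ S, (128:ℝ)/(p:ℝ)^2 = 128 * ∑ p ∈ S, (1:ℝ)/(p:ℝ)^2 := by
        rw [Finset.mul_sum]
        apply Finset.sum_congr rfl
        intro p _; ring
      rw [h128]
      calc 128 * ∑ p ∈ S, (1:ℝ)/(p:ℝ)^2 ≤ 128 * (2/x) := by
            apply mul_le_mul_of_nonneg_left hsum2 (by norm_num)
        _ ≤ 6464 * (2/x) := by
            have : (0:ℝ) ≤ 2/x := by positivity
            nlinarith
        _ ≤ 30000/(Real.sqrt x * Real.log x) := hfinal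
    · -- the identity
      have hI2 : ∫ ω, ∏ p ∈ S,
            ‖1 + (f p ω : ℂ)/(p:ℂ)^(((1/2 + σ : ℝ):ℂ) + (t₁:ℂ)*Complex.I)‖^(2:ℝ) ∂μ
          = ∏ p ∈ S,
            ((‖1 + ((1:ℝ):ℂ)/(p:ℂ)^(((1/2 + σ : ℝ):ℂ) + (t₁:ℂ)*Complex.I)‖^(2:ℝ)
              + ‖1 + ((-1:ℝ):ℂ)/(p:ℂ)^(((1/2 + σ : ℝ):ℂ) + (t₁:ℂ)*Complex.I)‖^(2:ℝ))/2) := by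
        exact (aux_integral_prod μ f hmeasf hindep _ hg2meas
            (fun p v => Real.rpow_nonneg (norm_nonneg _) _) S hSprime).trans
          (Finset.prod_congr rfl fun p hp =>
            aux_integral_single μ (f p) (hmeasf p) (hmap p (hSprime p hp)) _ (hg2meas p))
      rw [hI2, ← Finset.sum_add_distrib, Real.exp_sum]
      apply Finset.prod_congr rfl
      intro p hp
      obtain ⟨hpP, hpx', hpy'⟩ := hmem p hp
      obtain ⟨hQpos, _, hA, _, _⟩ := mean_eval σ t₁ y hσ hlogy p hpP hpy'
      rw [hA, show 1/(p:ℝ)^(1+2*σ) + (Real.log (1 + 1/(p:ℝ)^(1+2*σ)) - 1/(p:ℝ)^(1+2*σ))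
          = Real.log (1 + 1/(p:ℝ)^(1+2*σ)) by ring,
        Real.exp_log (by linarith : (0:ℝ) < 1 + 1/(p:ℝ)^(1+2*σ))]
  · -- part (ii)
    refine ⟨∑ p ∈ S, (Real.log ((1 + 1/(p:ℝ)^(1+2*σ)) /
        ((1 + 1/(p:ℝ)^(1+2*σ))^2 - 4*(1/(p:ℝ)^(1+2*σ))*(Real.cos (t₁*Real.log p))^2))
        - (1 + 2*Real.cos (2*t₁*Real.log p))/(p:ℝ)^(1+2*σ)), ?_, ?_⟩
    · refine le_trans (Finset.abs_sum_le_sum_abs _ _) ?_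
      have hstep : ∑ p ∈ S, |Real.log ((1 + 1/(p:ℝ)^(1+2*σ)) /
            ((1 + 1/(p:ℝ)^(1+2*σ))^2 - 4*(1/(p:ℝ)^(1+2*σ))*(Real.cos (t₁*Real.log p))^2))
            - (1 + 2*Real.cos (2*t₁*Real.log p))/(p:ℝ)^(1+2*σ)|
          ≤ ∑ p ∈ S, (6464:ℝ)/(p:ℝ)^2 := by
        apply Finset.sum_le_sum
        intro p hp
        obtain ⟨hp0, hQpos, hQ8, hQ50⟩ := hQfacts p hp
        have hmaineq : (1 + 2*Real.cos (2*t₁*Real.log p))/(p:ℝ)^(1+2*σ)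
            = (4*(Real.cos (t₁*Real.log p))^2 - 1)*(1/(p:ℝ)^(1+2*σ)) := by
          rw [show (2:ℝ)*t₁*Real.log p = 2*(t₁*Real.log p) by ring, Real.cos_two_mul,
            div_eq_mul_one_div]
          ring
        rw [hmaineq]
        have hcc : (Real.cos (t₁*Real.log p))^2 ≤ 1 := by
          nlinarith [Real.neg_one_le_cos (t₁*Real.log p), Real.cos_le_one (t₁*Real.log p)]
        exact logB_bound (p:ℝ) _ (Real.cos (t₁*Real.log p)) hp0 hQpos hQ50 hQ8 hcc
      refine hstep.trans ?_
      have h6464 : ∑ p ∈ S, (6464:ℝ)/(p:ℝ)^2 = 6464 * ∑ p ∈ S, (1:ℝ)/(p:ℝ)^2 := by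
        rw [Finset.mul_sum]
        apply Finset.sum_congr rfl
        intro p _; ring
      rw [h6464]
      calc 6464 * ∑ p ∈ S, (1:ℝ)/(p:ℝ)^2 ≤ 6464 * (2/x) := by
            apply mul_le_mul_of_nonneg_left hsum2 (by norm_num)
        _ ≤ 30000/(Real.sqrt x * Real.log x) := hfinal
    · have hIm : ∫ ω, ∏ p ∈ S,
            ‖1 + (f p ω : ℂ)/(p:ℂ)^(((1/2 + σ : ℝ):ℂ) + (t₁:ℂ)*Complex.I)‖^(-2:ℝ) ∂μ
          = ∏ p ∈ S,
            ((‖1 + ((1:ℝ):ℂ)/(p:ℂ)^(((1/2 + σ : ℝ):ℂ) + (t₁:ℂ)*Complex.I)‖^(-2:ℝ)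
              + ‖1 + ((-1:ℝ):ℂ)/(p:ℂ)^(((1/2 + σ : ℝ):ℂ) + (t₁:ℂ)*Complex.I)‖^(-2:ℝ))/2) := by
        exact (aux_integral_prod μ f hmeasf hindep _ hgmmeas
            (fun p v => Real.rpow_nonneg (norm_nonneg _) _) S hSprime).trans
          (Finset.prod_congr rfl fun p hp =>
            aux_integral_single μ (f p) (hmeasf p) (hmap p (hSprime p hp)) _ (hgmmeas p))
      rw [hIm, ← Finset.sum_add_distrib, Real.exp_sum]
      apply Finset.prod_congr rfl
      intro p hp
      obtain ⟨hpP, hpx', hpy'⟩ := hmem p hp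
      obtain ⟨hQpos, _, _, hB, hD⟩ := mean_eval σ t₁ y hσ hlogy p hpP hpy'
      rw [hB, show (1 + 2*Real.cos (2*t₁*Real.log p))/(p:ℝ)^(1+2*σ)
          + (Real.log ((1 + 1/(p:ℝ)^(1+2*σ)) /
            ((1 + 1/(p:ℝ)^(1+2*σ))^2 - 4*(1/(p:ℝ)^(1+2*σ))*(Real.cos (t₁*Real.log p))^2))
            - (1 + 2*Real.cos (2*t₁*Real.log p))/(p:ℝ)^(1+2*σ))
          = Real.log ((1 + 1/(p:ℝ)^(1+2*σ)) /
            ((1 + 1/(p:ℝ)^(1+2*σ))^2 - 4*(1/(p:ℝ)^(1+2*σ))*(Real.cos (t₁*Real.log p))^2))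
          by ring,
        Real.exp_log (div_pos (by linarith : (0:ℝ) < 1 + 1/(p:ℝ)^(1+2*σ)) hD)]
end
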